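/- arXiv:1305.3498 — 12 statements merged into one kernel-verified Lean document; each statement's English description precedes it below -/
import Mathlib

section
/- Let t ≥ 1 and k = 2t, and suppose Φ_1, …, Φ_{2t} and S_1, …, S_{2t} satisfy the (r = 2) subspace conditions. For p, q in {1,…,t} let Π_{p,q} denote the composition applying Φ_{2p−1} first and then Φ_{2q} (the paper's product Φ_{2p−1}Φ_{2q}). If for some p₀, q₀ in {1,…,t} the map Π_{p₀,q₀} lies in the F-linear span of the other t² − 1 maps {Π_{p,q} : (p,q) ≠ (p₀,q₀)}, then S_{2p₀−1} ∩ S_{2q₀} = {0}; in other words, S_{2p₀−1} and S_{2q₀} are complementary subspaces of dimension ℓ/2. -/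
set_option maxHeartbeats 1000000


/-- Under the (r = 2) subspace conditions for `Φ₁, …, Φ_{2t}` and
`S₁, …, S_{2t}`, if the composition `Π_{p₀,q₀}` (apply `Φ_{2p₀−1}` first, then `Φ_{2q₀}`)
lies in the span of the other maps `Π_{p,q}`, then `S_{2p₀−1} ∩ S_{2q₀} = {0}`,
i.e. they are complementary subspaces of dimension `ℓ/2`. -/
theorem stmt1 (F : Type*) [Field F] (V : Type*) [AddCommGroup V] [Module F V]
    [FiniteDimensional F V] (ℓ : ℕ) (hℓeven : Even ℓ) (hℓpos : 0 < ℓ)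
    (hdim : Module.finrank F V = ℓ)
    (t : ℕ) (ht : 1 ≤ t)
    (Φ : Fin (2 * t) → V ≃ₗ[F] V) (S : Fin (2 * t) → Submodule F V)
    (hSdim : ∀ i, Module.finrank F (S i) = ℓ / 2)
    (h1 : ∀ i j : Fin (2 * t), i ≠ j → (S i).map (Φ j : V →ₗ[F] V) = S i)
    (h2 : ∀ i : Fin (2 * t), (S i).map (Φ i : V →ₗ[F] V) ⊓ S i = ⊥)
    (Pi : Fin t → Fin t → Module.End F V)
    (hPi : ∀ p q : Fin t, Pi p q =
      ((Φ ⟨2 * q.val + 1, by omega⟩ : V →ₗ[F] V)) ∘ₗ ((Φ ⟨2 * p.val, by omega⟩ : V →ₗ[F] V)))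
    (p₀ q₀ : Fin t)
    (hspan : Pi p₀ q₀ ∈ Submodule.span F
      ((fun pq : Fin t × Fin t => Pi pq.1 pq.2) '' {pq | pq ≠ (p₀, q₀)})) :
    S ⟨2 * p₀.val, by omega⟩ ⊓ S ⟨2 * q₀.val + 1, by omega⟩ = ⊥ := by
  have step : ∀ (a b : Fin (2*t)), a ≠ b → ∀ x ∈ S a, (Φ b : V →ₗ[F] V) x ∈ S a := by
    intro a b hab x hx
    rw [← h1 a b hab]; exact Submodule.mem_map_of_mem hx
  set i : Fin (2*t) := ⟨2 * p₀.val, by omega⟩ with hi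
  set j : Fin (2*t) := ⟨2 * q₀.val + 1, by omega⟩ with hj
  have hij : i ≠ j := by simp [hi, hj, Fin.ext_iff]; omega
  rw [Submodule.eq_bot_iff]
  intro v hv
  obtain ⟨hvi, hvj⟩ := Submodule.mem_inf.mp hv
  set D : Submodule F V := S i ⊓ S j with hD
  set U : Submodule F V := S j ⊔ D.map (Φ j : V →ₗ[F] V) with hU
  have hgen : ∀ pq : Fin t × Fin t, pq ≠ (p₀, q₀) → (Pi pq.1 pq.2) v ∈ U := by
    rintro ⟨p, q⟩ hpq
    rw [hPi]
    simp only [LinearMap.comp_apply]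
    set a : Fin (2*t) := ⟨2 * p.val, by omega⟩ with ha
    set b : Fin (2*t) := ⟨2 * q.val + 1, by omega⟩ with hb
    have haj : j ≠ a := by simp [hj, ha, Fin.ext_iff]; omega
    have hav : (Φ a : V →ₗ[F] V) v ∈ S j := step j a haj v hvj
    by_cases hq : q = q₀
    · have hp : p ≠ p₀ := by rintro rfl; exact hpq (by rw [hq])
      have hai : i ≠ a := by
        simp [hi, ha, Fin.ext_iff]
        intro h
        exact hp (Fin.ext (by omega))
      have hbj : b = j := by rw [hb, hj, hq]
      have havi : (Φ a : V →ₗ[F] V) v ∈ D := by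
        exact Submodule.mem_inf.mpr ⟨step i a hai v hvi, hav⟩
      rw [hbj]
      exact Submodule.mem_sup_right (Submodule.mem_map_of_mem havi)
    · have hbj : j ≠ b := by
        simp [hj, hb, Fin.ext_iff]
        intro h
        exact hq (Fin.ext (by omega)).symm
      exact Submodule.mem_sup_left (step j b hbj _ hav)
  have hmem : (Pi p₀ q₀) v ∈ U := by
    have hle : Submodule.span F ((fun pq : Fin t × Fin t => Pi pq.1 pq.2) '' {pq | pq ≠ (p₀, q₀)})
        ≤ U.comap (LinearMap.applyₗ v) := by
      rw [Submodule.span_le]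
      rintro _ ⟨pq, hpq, rfl⟩
      exact hgen pq hpq
    exact hle hspan
  rw [hPi p₀ q₀] at hmem
  simp only [LinearMap.comp_apply] at hmem
  obtain ⟨s, hs, d', hd', hsum⟩ := Submodule.mem_sup.mp hmem
  obtain ⟨d, hd, rfl⟩ := hd'
  have hdD := Submodule.mem_inf.mp hd
  have hji : j ≠ i := hij.symm
  have hΦiv : (Φ i : V →ₗ[F] V) v ∈ S j := step j i hji v hvj
  set u : V := (Φ i : V →ₗ[F] V) v - d with hu
  have huSj : u ∈ S j := Submodule.sub_mem _ hΦiv hdD.2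
  have hΦju : (Φ j : V →ₗ[F] V) u = s := by
    have h' : (Φ j : V →ₗ[F] V) ((Φ i : V →ₗ[F] V) v) = s + (Φ j : V →ₗ[F] V) d :=
      hsum.symm
    rw [hu, map_sub, h']
    abel
  have hΦju0 : (Φ j : V →ₗ[F] V) u = 0 := by
    have hin : (Φ j : V →ₗ[F] V) u ∈ (S j).map (Φ j : V →ₗ[F] V) ⊓ S j :=
      Submodule.mem_inf.mpr ⟨Submodule.mem_map_of_mem huSj, hΦju ▸ hs⟩
    rw [h2 j] at hin
    exact hin
  have hu0 : u = 0 := by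
    have := (Φ j).injective (by simpa using hΦju0)
    simpa using this
  have hΦivd : (Φ i : V →ₗ[F] V) v = d := sub_eq_zero.mp hu0
  have hΦiv0 : (Φ i : V →ₗ[F] V) v = 0 := by
    have hin : (Φ i : V →ₗ[F] V) v ∈ (S i).map (Φ i : V →ₗ[F] V) ⊓ S i :=
      Submodule.mem_inf.mpr ⟨Submodule.mem_map_of_mem hvi, hΦivd ▸ hdD.1⟩
    rw [h2 i] at hin
    exact hin
  have : v = 0 := (Φ i).injective (by simpa using hΦiv0)
  simp [this]
end

section
/- Suppose Φ_1, …, Φ_k and S_1, …, S_k satisfy the (r = 2) subspace conditions, let n be an integer with 2n ≤ k, and assume S_{2j−1} ∩ S_{2j} = {0} for each j in {1,…,n}. For ε = (ε_1,…,ε_n) ∈ {0,1}^n let Υ_ε be the composition, taken over j = 1,…,n in increasing order (j = 1 applied first), of the maps (Φ_{2j−1} followed by Φ_{2j}) for those j with ε_j = 1 (so Υ_{(0,…,0)} = id_V); this is the paper's ordered product ∏_{j=1}^n (Φ_{2j−1}Φ_{2j})^{ε_j}. Then the 2^n endomorphisms {Υ_ε : ε ∈ {0,1}^n} are linearly independent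 over F. -/
open Module

section Aux

variable {F : Type*} [Field F] {V : Type*} [AddCommGroup V] [Module F V]

private def Ufam {k : ℕ} (Φ : Fin k → V ≃ₗ[F] V) (n : ℕ) (hn : 2 * n ≤ k)
    (ε : Fin n → Bool) : Module.End F V :=
  (List.ofFn (fun j : Fin n =>
    if ε j then
      ((Φ ⟨2 * j.val + 1, by have := hn; omega⟩ : V →ₗ[F] V)) ∘ₗ
        ((Φ ⟨2 * j.val, by have := hn; omega⟩ : V →ₗ[F] V))
    else (1 : Module.End F V))).reverse.prod

private lemma Ufam_zero {k : ℕ} (Φ : Fin k → V ≃ₗ[F] V) (hn : 2 * 0 ≤ k)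
    (ε : Fin 0 → Bool) : Ufam Φ 0 hn ε = 1 := by
  simp [Ufam]

private lemma Ufam_snoc {k : ℕ} (Φ : Fin k → V ≃ₗ[F] V) (n : ℕ) (hn : 2 * (n + 1) ≤ k)
    (ε : Fin n → Bool) (b : Bool) :
    Ufam Φ (n + 1) hn (Fin.snoc ε b) =
      (if b then
        ((Φ ⟨2 * n + 1, by omega⟩ : V →ₗ[F] V)) ∘ₗ ((Φ ⟨2 * n, by omega⟩ : V →ₗ[F] V))
       else (1 : Module.End F V)) * Ufam Φ n (by omega) ε := by
  simp only [Ufam, List.ofFn_succ', List.reverse_concat, List.prod_cons]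
  simp [Fin.snoc_castSucc, Fin.snoc_last]

private lemma Ufam_mem {k : ℕ} (Φ : Fin k → V ≃ₗ[F] V) (S : Fin k → Submodule F V)
    (h1 : ∀ i j : Fin k, i ≠ j → (S i).map (Φ j : V →ₗ[F] V) = S i) :
    ∀ (n : ℕ) (hn : 2 * n ≤ k) (ε : Fin n → Bool) (i : Fin k), 2 * n ≤ i.val →
      ∀ v ∈ S i, Ufam Φ n hn ε v ∈ S i := by
  have hΦmem : ∀ (i j : Fin k), i ≠ j → ∀ u ∈ S i, (Φ j : V →ₗ[F] V) u ∈ S i := by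
    intro i j hij u hu
    exact h1 i j hij ▸ Submodule.mem_map_of_mem hu
  intro n
  induction n with
  | zero => intro hn ε i hi v hv; simpa [Ufam_zero] using hv
  | succ n IH =>
    intro hn ε i hi v hv
    rw [← Fin.snoc_init_self ε, Ufam_snoc Φ n hn, Module.End.mul_apply]
    have hw := IH (by omega) (Fin.init ε) i (by omega) v hv
    cases hb : ε (Fin.last n) with
    | false => simpa using hw
    | true =>
      rw [if_pos rfl, LinearMap.comp_apply]
      exact hΦmem i ⟨2 * n + 1, by omega⟩
          (Fin.ne_of_val_ne (show i.val ≠ 2 * n + 1 by omega)) _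
        (hΦmem i ⟨2 * n, by omega⟩
          (Fin.ne_of_val_ne (show i.val ≠ 2 * n by omega)) _ hw)

private lemma aux3 [FiniteDimensional F V] (ℓ : ℕ) (hℓeven : Even ℓ) (hℓpos : 0 < ℓ)
    (hdim : finrank F V = ℓ)
    {k : ℕ} (Φ : Fin k → V ≃ₗ[F] V) (S : Fin k → Submodule F V)
    (hSdim : ∀ i, finrank F (S i) = ℓ / 2)
    (h1 : ∀ i j : Fin k, i ≠ j → (S i).map (Φ j : V →ₗ[F] V) = S i)
    (h2 : ∀ i : Fin k, (S i).map (Φ i : V →ₗ[F] V) ⊓ S i = ⊥) :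
    ∀ (n : ℕ) (hn : 2 * n ≤ k)
      (_ : ∀ j : Fin n, S ⟨2 * j.val, by have := hn; omega⟩ ⊓ S ⟨2 * j.val + 1, by have := hn; omega⟩ = ⊥)
      (g : (Fin n → Bool) → F),
      ∑ ε, g ε • Ufam Φ n hn ε = 0 → ∀ ε, g ε = 0 := by
  have hΦmem : ∀ (i j : Fin k), i ≠ j → ∀ u ∈ S i, (Φ j : V →ₗ[F] V) u ∈ S i := by
    intro i j hij u hu
    exact h1 i j hij ▸ Submodule.mem_map_of_mem hu
  haveI : Nontrivial V := Module.finrank_pos_iff.mp (by rw [hdim]; exact hℓpos)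
  intro n
  induction n with
  | zero =>
    intro hn hdisj g hsum ε
    obtain ⟨v, hv⟩ := exists_ne (0 : V)
    rw [Fintype.sum_subsingleton _ ε] at hsum
    have h := congrArg (fun f : Module.End F V => f v) hsum
    simp only [Ufam_zero, LinearMap.smul_apply, Module.End.one_apply,
      LinearMap.zero_apply, smul_eq_zero] at h
    rcases h with h | h
    · exact h
    · exact absurd h hv
  | succ n IH =>
    intro hn hdisj g hsum
    have hn' : 2 * n ≤ k := by omega
    set iP : Fin k := ⟨2 * n, by omega⟩ with hiP
    set iQ : Fin k := ⟨2 * n + 1, by omega⟩ with hiQ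
    have hiPv : iP.val = 2 * n := rfl
    have hiQv : iQ.val = 2 * n + 1 := rfl
    set Ψ : Module.End F V :=
      ((Φ iQ : V →ₗ[F] V)) ∘ₗ ((Φ iP : V →ₗ[F] V)) with hΨ
    set A : Module.End F V := ∑ ε' : Fin n → Bool, g (Fin.snoc ε' false) • Ufam Φ n hn' ε'
      with hA
    set B : Module.End F V := ∑ ε' : Fin n → Bool, g (Fin.snoc ε' true) • Ufam Φ n hn' ε'
      with hB
    have hsnoc : ∀ (ε' : Fin n → Bool) (b : Bool),
        Ufam Φ (n + 1) hn (Fin.snoc ε' b) = (if b then Ψ else 1) * Ufam Φ n hn' ε' := by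
      intro ε' b
      rw [Ufam_snoc Φ n hn]
    -- split the sum
    have hsplit : A + Ψ * B = 0 := by
      rw [← hsum, ← (Fin.snocEquiv (fun _ : Fin (n + 1) => Bool)).sum_comp
        (fun ε => g ε • Ufam Φ (n + 1) hn ε)]
      rw [Fintype.sum_prod_type, Fintype.sum_bool]
      have he : ∀ (b : Bool) (ε' : Fin n → Bool),
          (Fin.snocEquiv (fun _ : Fin (n + 1) => Bool)) (b, ε') = Fin.snoc ε' b :=
        fun b ε' => rfl
      simp only [he, hsnoc, if_true, if_false, one_mul]
      rw [hA, hB, Finset.mul_sum]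
      simp only [mul_smul_comm]
      exact add_comm _ _
    have hrel : ∀ v : V,
        A v + (Φ iQ : V →ₗ[F] V) ((Φ iP : V →ₗ[F] V) (B v)) = 0 := by
      intro v
      have h := congrArg (fun f : Module.End F V => f v) hsplit
      simpa [hΨ, LinearMap.add_apply, Module.End.mul_apply, LinearMap.comp_apply] using h
    have hAmem : ∀ (i : Fin k), 2 * n ≤ i.val → ∀ v ∈ S i, A v ∈ S i := by
      intro i hi v hv
      rw [hA, LinearMap.sum_apply]
      exact Submodule.sum_mem _ fun ε' _ => by
        rw [LinearMap.smul_apply]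
        exact Submodule.smul_mem _ _ (Ufam_mem Φ S h1 n hn' ε' i hi v hv)
    have hBmem : ∀ (i : Fin k), 2 * n ≤ i.val → ∀ v ∈ S i, B v ∈ S i := by
      intro i hi v hv
      rw [hB, LinearMap.sum_apply]
      exact Submodule.sum_mem _ fun ε' _ => by
        rw [LinearMap.smul_apply]
        exact Submodule.smul_mem _ _ (Ufam_mem Φ S h1 n hn' ε' i hi v hv)
    -- vanishing on Q := S iQ
    have hQ : ∀ v ∈ S iQ, A v = 0 ∧ B v = 0 := by
      intro v hv
      have hAv : A v ∈ S iQ := hAmem iQ (by omega) v hv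
      have hBv : B v ∈ S iQ := hBmem iQ (by omega) v hv
      have hφBv : (Φ iP : V →ₗ[F] V) (B v) ∈ S iQ :=
        hΦmem iQ iP (Fin.ne_of_val_ne (by omega)) _ hBv
      have hψ : (Φ iQ : V →ₗ[F] V) ((Φ iP : V →ₗ[F] V) (B v)) ∈
          (S iQ).map (Φ iQ : V →ₗ[F] V) := Submodule.mem_map_of_mem hφBv
      have hAv2 : A v ∈ (S iQ).map (Φ iQ : V →ₗ[F] V) := by
        have hAeq : A v = -((Φ iQ : V →ₗ[F] V) ((Φ iP : V →ₗ[F] V) (B v))) :=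
          eq_neg_of_add_eq_zero_left (hrel v)
        rw [hAeq]; exact neg_mem hψ
      have hA0 : A v = 0 := by
        have hm : A v ∈ (S iQ).map (Φ iQ : V →ₗ[F] V) ⊓ S iQ := ⟨hAv2, hAv⟩
        rw [h2 iQ] at hm
        simpa using hm
      refine ⟨hA0, ?_⟩
      have hz : (Φ iQ : V →ₗ[F] V) ((Φ iP : V →ₗ[F] V) (B v)) = 0 := by
        have := hrel v; rw [hA0, zero_add] at this; exact this
      have hz1 : (Φ iP : V →ₗ[F] V) (B v) = 0 := by
        have := (Φ iQ).map_eq_zero_iff.mp (by simpa using hz)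
        simpa using this
      have := (Φ iP).map_eq_zero_iff.mp (by simpa using hz1)
      simpa using this
    -- vanishing on P := S iP
    have hP : ∀ v ∈ S iP, A v = 0 ∧ B v = 0 := by
      intro v hv
      have hAv : A v ∈ S iP := hAmem iP (by omega) v hv
      have hBv : B v ∈ S iP := hBmem iP (by omega) v hv
      have hψφ : (Φ iQ : V →ₗ[F] V) ((Φ iP : V →ₗ[F] V) (B v)) ∈ S iP := by
        have heq : (Φ iQ : V →ₗ[F] V) ((Φ iP : V →ₗ[F] V) (B v)) = -(A v) :=
          eq_neg_of_add_eq_zero_right (hrel v)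
        rw [heq]; exact neg_mem hAv
      have hφ : (Φ iP : V →ₗ[F] V) (B v) ∈ S iP := by
        have hmap : (S iP).map (Φ iQ : V →ₗ[F] V) = S iP :=
          h1 iP iQ (Fin.ne_of_val_ne (by omega))
        rw [← hmap] at hψφ
        obtain ⟨u, hu, huv⟩ := hψφ
        have : u = (Φ iP : V →ₗ[F] V) (B v) := (Φ iQ).injective (by simpa using huv)
        rwa [← this]
      have hφ2 : (Φ iP : V →ₗ[F] V) (B v) ∈ (S iP).map (Φ iP : V →ₗ[F] V) :=
        Submodule.mem_map_of_mem hBv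
      have hφ0 : (Φ iP : V →ₗ[F] V) (B v) = 0 := by
        have hm : (Φ iP : V →ₗ[F] V) (B v) ∈
            (S iP).map (Φ iP : V →ₗ[F] V) ⊓ S iP := ⟨hφ2, hφ⟩
        rw [h2 iP] at hm
        simpa using hm
      have hB0 : B v = 0 := by
        have := (Φ iP).map_eq_zero_iff.mp (by simpa using hφ0)
        simpa using this
      refine ⟨?_, hB0⟩
      have := hrel v
      rw [hB0] at this
      simpa using this
    -- P ⊔ Q = ⊤
    have hPQ : S iP ⊔ S iQ = ⊤ := by
      apply Submodule.eq_top_of_finrank_eq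
      have hsum2 := Submodule.finrank_sup_add_finrank_inf_eq (S iP) (S iQ)
      have hbot : S iP ⊓ S iQ = ⊥ := hdisj ⟨n, by omega⟩
      rw [hbot, finrank_bot, add_zero, hSdim, hSdim] at hsum2
      obtain ⟨m, hm⟩ := hℓeven
      rw [hdim]
      omega
    have hA0 : A = 0 := by
      apply LinearMap.ext
      intro v
      have hvmem : v ∈ S iP ⊔ S iQ := by rw [hPQ]; exact Submodule.mem_top
      obtain ⟨p, hp, q, hq, rfl⟩ := Submodule.mem_sup.mp hvmem
      rw [map_add, (hP p hp).1, (hQ q hq).1, add_zero, LinearMap.zero_apply]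
    have hB0 : B = 0 := by
      apply LinearMap.ext
      intro v
      have hvmem : v ∈ S iP ⊔ S iQ := by rw [hPQ]; exact Submodule.mem_top
      obtain ⟨p, hp, q, hq, rfl⟩ := Submodule.mem_sup.mp hvmem
      rw [map_add, (hP p hp).2, (hQ q hq).2, add_zero, LinearMap.zero_apply]
    have hdisj' : ∀ j : Fin n,
        S ⟨2 * j.val, by omega⟩ ⊓ S ⟨2 * j.val + 1, by omega⟩ = ⊥ :=
      fun j => hdisj ⟨j.val, by omega⟩
    have hg0 : ∀ ε', g (Fin.snoc ε' false) = 0 :=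
      IH hn' hdisj' (fun ε' => g (Fin.snoc ε' false)) (by rw [← hA]; exact hA0)
    have hg1 : ∀ ε', g (Fin.snoc ε' true) = 0 :=
      IH hn' hdisj' (fun ε' => g (Fin.snoc ε' true)) (by rw [← hB]; exact hB0)
    intro ε
    rw [← Fin.snoc_init_self ε]
    cases hb : ε (Fin.last n) with
    | false => exact hg0 (Fin.init ε)
    | true => exact hg1 (Fin.init ε)

end Aux

/-- Under the (r = 2) subspace conditions, if `2n ≤ k` and
`S_{2j−1} ∩ S_{2j} = {0}` for `j = 1,…,n`, then the `2ⁿ` ordered products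
`Υ_ε = ∏_{j=1}^n (Φ_{2j−1}Φ_{2j})^{ε_j}` (the factor for `j = 1` applied first,
`Υ_{(0,…,0)} = id`) are linearly independent. -/
theorem stmt3 (F : Type*) [Field F] (V : Type*) [AddCommGroup V] [Module F V]
    [FiniteDimensional F V] (ℓ : ℕ) (hℓeven : Even ℓ) (hℓpos : 0 < ℓ)
    (hdim : Module.finrank F V = ℓ)
    (k : ℕ) (Φ : Fin k → V ≃ₗ[F] V) (S : Fin k → Submodule F V)
    (hSdim : ∀ i, Module.finrank F (S i) = ℓ / 2)
    (h1 : ∀ i j : Fin k, i ≠ j → (S i).map (Φ j : V →ₗ[F] V) = S i)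
    (h2 : ∀ i : Fin k, (S i).map (Φ i : V →ₗ[F] V) ⊓ S i = ⊥)
    (n : ℕ) (hn : 2 * n ≤ k)
    (hdisj : ∀ j : Fin n,
      S ⟨2 * j.val, by omega⟩ ⊓ S ⟨2 * j.val + 1, by omega⟩ = ⊥)
    (Υ : (Fin n → Bool) → Module.End F V)
    (hΥ : ∀ ε : Fin n → Bool, Υ ε =
      (List.ofFn (fun j : Fin n =>
        if ε j then
          ((Φ ⟨2 * j.val + 1, by omega⟩ : V →ₗ[F] V)) ∘ₗ
            ((Φ ⟨2 * j.val, by omega⟩ : V →ₗ[F] V))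
        else (1 : Module.End F V))).reverse.prod) :
    LinearIndependent F Υ := by
  have hU : ∀ ε, Υ ε = Ufam Φ n hn ε := fun ε => (hΥ ε).trans rfl
  rw [Fintype.linearIndependent_iff]
  intro g hg
  apply aux3 ℓ hℓeven hℓpos hdim Φ S hSdim h1 h2 n hn hdisj g
  rw [← hg]
  exact Finset.sum_congr rfl fun ε _ => by rw [hU ε]
end

section
/- Let ℓ ≥ 2 be an even integer and V an ℓ-dimensional vector space over a field F. If there exist invertible linear endomorphisms Φ_1, …, Φ_k of V and subspaces S_1, …, S_k of V satisfying the (r = 2) subspace conditions, then k ≤ max(4ℓ, 8·log₂ℓ), where log₂ denotes the real base-2 logarithm. -/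
open Module Submodule LinearMap

namespace Stmt4Aux

variable {F V : Type*} [Field F] [AddCommGroup V] [Module F V]

/-- Endomorphisms stabilizing a submodule `W`. -/
def stab (W : Submodule F V) : Submodule F (V →ₗ[F] V) where
  carrier := {f | ∀ x ∈ W, f x ∈ W}
  add_mem' := by intro a b ha hb x hx; simpa using W.add_mem (ha x hx) (hb x hx)
  zero_mem' := by intro x hx; simpa using W.zero_mem
  smul_mem' := by intro c a ha x hx; simpa using W.smul_mem c (ha x hx)

/-- Endomorphisms annihilating a submodule `W`. -/
def annih (W : Submodule F V) : Submodule F (V →ₗ[F] V) where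
  carrier := {f | ∀ x ∈ W, f x = 0}
  add_mem' := by intro a b ha hb x hx; simp [ha x hx, hb x hx]
  zero_mem' := by intro x hx; simp
  smul_mem' := by intro c a ha x hx; simp [ha x hx]

/-- Endomorphisms with range inside a submodule `W`. -/
def rngIn (W : Submodule F V) : Submodule F (V →ₗ[F] V) where
  carrier := {f | ∀ x, f x ∈ W}
  add_mem' := by intro a b ha hb x; simpa using W.add_mem (ha x) (hb x)
  zero_mem' := by intro x; simpa using W.zero_mem
  smul_mem' := by intro c a ha x; simpa using W.smul_mem c (ha x)

lemma mem_stab {W : Submodule F V} {f : V →ₗ[F] V} :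
    f ∈ stab W ↔ ∀ x ∈ W, f x ∈ W := Iff.rfl

lemma mem_annih {W : Submodule F V} {f : V →ₗ[F] V} :
    f ∈ annih W ↔ ∀ x ∈ W, f x = 0 := Iff.rfl

lemma mem_rngIn {W : Submodule F V} {f : V →ₗ[F] V} :
    f ∈ rngIn W ↔ ∀ x, f x ∈ W := Iff.rfl

variable [FiniteDimensional F V]

set_option synthInstance.maxHeartbeats 1000000 in
set_option maxHeartbeats 2000000 in
/-- The key halving step. -/
lemma step (φ : V ≃ₗ[F] V) (Sx : Submodule F V) (A : Submodule F (V →ₗ[F] V))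
    (hL : ∀ f ∈ A, (φ : V →ₗ[F] V) ∘ₗ f ∈ A)
    (hR : ∀ f ∈ A, f ∘ₗ (φ : V →ₗ[F] V) ∈ A)
    (hdisj : Sx.map (φ : V →ₗ[F] V) ⊓ Sx = ⊥)
    (hsup : Sx ⊔ Sx.map (φ : V →ₗ[F] V) = ⊤) :
    4 * finrank F ↥(A ⊓ stab Sx) ≤ 3 * finrank F ↥A := by
  classical
  let φL : V →ₗ[F] V := φ
  let B : Submodule F (V →ₗ[F] V) := A ⊓ stab Sx
  have hBA : B ≤ A := inf_le_left
  let N : Submodule F (V →ₗ[F] V) := A ⊓ annih Sx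
  let M : Submodule F (V →ₗ[F] V) := A ⊓ rngIn Sx
  have hNB : N ≤ B := by
    refine le_inf inf_le_left ?_
    rintro f ⟨hfA, hfann⟩ x hx
    rw [hfann x hx]; exact Sx.zero_mem
  have hMB : M ≤ B := by
    refine le_inf inf_le_left ?_
    intro f hf x hx
    exact hf.2 x
  -- the quotient
  let B' : Submodule F ↥A := B.comap A.subtype
  have hfinB' : finrank F ↥B' = finrank F ↥B :=
    (Submodule.comapSubtypeEquivOfLe hBA).finrank_eq
  have hQ : finrank F (↥A ⧸ B') + finrank F ↥B = finrank F ↥A := by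
    rw [← hfinB']; exact Submodule.finrank_quotient_add_finrank B'
  -- decomposition of arbitrary vectors
  have hdec : ∀ v : V, ∃ a ∈ Sx, ∃ s ∈ Sx, v = a + φ s := by
    intro v
    have hv : v ∈ Sx ⊔ Sx.map (φ : V →ₗ[F] V) := by rw [hsup]; exact mem_top
    rcases Submodule.mem_sup.mp hv with ⟨a, ha, b, hb, rfl⟩
    rcases Submodule.mem_map.mp hb with ⟨s, hs, rfl⟩
    exact ⟨a, ha, s, hs, rfl⟩
  -- the three transformation maps
  let Ψ₁ : (V →ₗ[F] V) →ₗ[F] (V →ₗ[F] V) := LinearMap.llcomp F V V V φL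
  let Ψ₂ : (V →ₗ[F] V) →ₗ[F] (V →ₗ[F] V) := LinearMap.lcomp F V φL
  have hΨ₁ : ∀ f : V →ₗ[F] V, Ψ₁ f = φL ∘ₗ f := fun f => rfl
  have hΨ₂ : ∀ f : V →ₗ[F] V, Ψ₂ f = f ∘ₗ φL := fun f => rfl
  -- map 1 : left multiplication by φ
  have hres1 : ∀ f ∈ B, Ψ₁ f ∈ A := fun f hf => hL f (hBA hf)
  let m₁ : ↥B →ₗ[F] ↥A := Ψ₁.restrict hres1
  let g₁ : ↥B →ₗ[F] (↥A ⧸ B') := B'.mkQ ∘ₗ m₁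
  have hker1 : (LinearMap.ker g₁).map B.subtype ≤ N := by
    rintro f ⟨⟨f, hfB⟩, hfk, rfl⟩
    have hfk' : φL ∘ₗ f ∈ B := by
      have h : m₁ ⟨f, hfB⟩ ∈ B' := by
        simpa [g₁, Submodule.Quotient.mk_eq_zero] using hfk
      simpa [B', m₁, LinearMap.restrict_apply, hΨ₁] using h
    refine ⟨hBA hfB, ?_⟩
    intro x hx
    show f x = 0
    have h1 : f x ∈ Sx := hfB.2 x hx
    have h2 : φ (f x) ∈ Sx := by
      have := hfk'.2 x hx
      simpa [φL] using this
    have h3 : φ (f x) ∈ Sx.map (φ : V →ₗ[F] V) := Submodule.mem_map_of_mem h1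
    have h0 : φ (f x) ∈ (⊥ : Submodule F V) := by
      rw [← hdisj]; exact ⟨h3, h2⟩
    have h4 : φ (f x) = 0 := by simpa using h0
    have := φ.injective (by simpa using h4 : φ (f x) = φ 0)
    simpa using this
  have hineq1 : finrank F ↥B ≤ finrank F (↥A ⧸ B') + finrank F ↥N := by
    have h := LinearMap.finrank_range_add_finrank_ker g₁
    have hr : finrank F ↥(LinearMap.range g₁) ≤ finrank F (↥A ⧸ B') :=
      (LinearMap.range g₁).finrank_le
    have hk : finrank F ↥(LinearMap.ker g₁) ≤ finrank F ↥N := by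
      have e : finrank F ↥(LinearMap.ker g₁) =
          finrank F ↥((LinearMap.ker g₁).map B.subtype) :=
        (Submodule.equivMapOfInjective B.subtype (Submodule.injective_subtype B)
          (LinearMap.ker g₁)).finrank_eq
      rw [e]; exact Submodule.finrank_mono hker1
    omega
  -- map 2 : right multiplication by φ
  have hres2 : ∀ f ∈ B, Ψ₂ f ∈ A := fun f hf => hR f (hBA hf)
  let m₂ : ↥B →ₗ[F] ↥A := Ψ₂.restrict hres2
  let g₂ : ↥B →ₗ[F] (↥A ⧸ B') := B'.mkQ ∘ₗ m₂
  have hker2 : (LinearMap.ker g₂).map B.subtype ≤ M := by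
    rintro f ⟨⟨f, hfB⟩, hfk, rfl⟩
    have hfk' : f ∘ₗ φL ∈ B := by
      have h : m₂ ⟨f, hfB⟩ ∈ B' := by
        simpa [g₂, Submodule.Quotient.mk_eq_zero] using hfk
      simpa [B', m₂, LinearMap.restrict_apply, hΨ₂] using h
    refine ⟨hBA hfB, ?_⟩
    intro v
    show f v ∈ Sx
    rcases hdec v with ⟨a, ha, s, hs, rfl⟩
    have h1 : f a ∈ Sx := hfB.2 a ha
    have h2 : f (φ s) ∈ Sx := by
      have := hfk'.2 s hs
      simpa [φL] using this
    have h3 : f (a + φ s) = f a + f (φ s) := by simp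
    rw [h3]; exact Sx.add_mem h1 h2
  have hineq2 : finrank F ↥B ≤ finrank F (↥A ⧸ B') + finrank F ↥M := by
    have h := LinearMap.finrank_range_add_finrank_ker g₂
    have hr : finrank F ↥(LinearMap.range g₂) ≤ finrank F (↥A ⧸ B') :=
      (LinearMap.range g₂).finrank_le
    have hk : finrank F ↥(LinearMap.ker g₂) ≤ finrank F ↥M := by
      have e : finrank F ↥(LinearMap.ker g₂) =
          finrank F ↥((LinearMap.ker g₂).map B.subtype) :=
        (Submodule.equivMapOfInjective B.subtype (Submodule.injective_subtype B)
          (LinearMap.ker g₂)).finrank_eq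
      rw [e]; exact Submodule.finrank_mono hker2
    omega
  -- map 3 : two-sided multiplication, injective on N ⊓ M
  have hres3 : ∀ f ∈ N ⊓ M, (Ψ₁ ∘ₗ Ψ₂) f ∈ A := by
    intro f hf
    exact hL _ (hR f hf.1.1)
  let m₃ : ↥(N ⊓ M) →ₗ[F] ↥A := (Ψ₁ ∘ₗ Ψ₂).restrict hres3
  let g₃ : ↥(N ⊓ M) →ₗ[F] (↥A ⧸ B') := B'.mkQ ∘ₗ m₃
  have hinj3 : Function.Injective g₃ := by
    rw [← LinearMap.ker_eq_bot, Submodule.eq_bot_iff]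
    rintro ⟨f, hfNM⟩ hfk
    have hfk' : φL ∘ₗ (f ∘ₗ φL) ∈ B := by
      have h : m₃ ⟨f, hfNM⟩ ∈ B' := by
        simpa [g₃, Submodule.Quotient.mk_eq_zero] using hfk
      simpa [B', m₃, LinearMap.restrict_apply, hΨ₁, hΨ₂] using h
    have hfzero : f = 0 := by
      have hrange : ∀ x, f x ∈ Sx := hfNM.2.2
      have hTzero : ∀ s ∈ Sx, f (φ s) = 0 := by
        intro s hs
        have h2 : φ (f (φ s)) ∈ Sx := by
          have := hfk'.2 s hs
          simpa [φL] using this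
        have h3 : φ (f (φ s)) ∈ Sx.map (φ : V →ₗ[F] V) :=
          Submodule.mem_map_of_mem (hrange (φ s))
        have h0 : φ (f (φ s)) ∈ (⊥ : Submodule F V) := by
          rw [← hdisj]; exact ⟨h3, h2⟩
        have h4 : φ (f (φ s)) = 0 := by simpa using h0
        have := φ.injective (by simpa using h4 : φ (f (φ s)) = φ 0)
        simpa using this
      ext v
      rcases hdec v with ⟨a, ha, s, hs, rfl⟩
      have h1 : f a = 0 := hfNM.1.2 a ha
      have h2 : f (φ s) = 0 := hTzero s hs
      simp [h1, h2]
    exact Subtype.ext hfzero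
  have hineq3 : finrank F ↥(N ⊓ M) ≤ finrank F (↥A ⧸ B') :=
    LinearMap.finrank_le_finrank_of_injective hinj3
  -- ineq 4 : Grassmann
  have hsupNM : N ⊔ M ≤ B := sup_le hNB hMB
  have hineq4 : finrank F ↥N + finrank F ↥M ≤ finrank F ↥B + finrank F ↥(N ⊓ M) := by
    have h := Submodule.finrank_sup_add_finrank_inf_eq N M
    have h2 : finrank F ↥(N ⊔ M) ≤ finrank F ↥B := Submodule.finrank_mono hsupNM
    omega
  change 4 * finrank F ↥B ≤ 3 * finrank F ↥A
  omega

end Stmt4Aux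

open Module in
set_option synthInstance.maxHeartbeats 1000000 in
set_option maxHeartbeats 2000000 in
/-- If there exist invertible endomorphisms `Φ₁, …, Φ_k` of an
`ℓ`-dimensional vector space (`ℓ ≥ 2` even) and subspaces `S₁, …, S_k` of dimension
`ℓ/2` satisfying the (r = 2) subspace conditions, then `k ≤ max (4ℓ, 8·log₂ ℓ)`. -/
theorem stmt4 (F : Type*) [Field F] (V : Type*) [AddCommGroup V] [Module F V]
    [FiniteDimensional F V] (ℓ : ℕ) (hℓ2 : 2 ≤ ℓ) (hℓeven : Even ℓ)
    (hdim : Module.finrank F V = ℓ)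
    (k : ℕ) (Φ : Fin k → V ≃ₗ[F] V) (S : Fin k → Submodule F V)
    (hSdim : ∀ i, Module.finrank F (S i) = ℓ / 2)
    (h1 : ∀ i j : Fin k, i ≠ j → (S i).map (Φ j : V →ₗ[F] V) = S i)
    (h2 : ∀ i : Fin k, (S i).map (Φ i : V →ₗ[F] V) ⊓ S i = ⊥) :
    (k : ℝ) ≤ max (4 * (ℓ : ℝ)) (8 * Real.logb 2 ℓ) := by
  classical
  -- the chain of stabilizer algebras
  let C : ℕ → Submodule F (V →ₗ[F] V) :=
    fun t => ⨅ (j : Fin k) (_ : (j : ℕ) < t), Stmt4Aux.stab (S j)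
  have hmemC : ∀ (t : ℕ) (f : V →ₗ[F] V),
      f ∈ C t ↔ ∀ j : Fin k, (j : ℕ) < t → ∀ x ∈ S j, f x ∈ S j := by
    intro t f
    simp only [C, Submodule.mem_iInf]
    rfl
  -- the halving step
  have hstep : ∀ t, t < k →
      4 * finrank F ↥(C (t + 1)) ≤ 3 * finrank F ↥(C t) := by
    intro t ht
    set i : Fin k := ⟨t, ht⟩ with hi
    have hφS : ∀ j : Fin k, (j : ℕ) < t → ∀ x ∈ S j, (Φ i) x ∈ S j := by
      intro j hj x hx
      have hne : j ≠ i := by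
        intro h
        rw [h, hi] at hj
        exact absurd hj (lt_irrefl t)
      have : (Φ i) x ∈ (S j).map (Φ i : V →ₗ[F] V) := Submodule.mem_map_of_mem hx
      rwa [h1 j i hne] at this
    have hL : ∀ f ∈ C t, (Φ i : V →ₗ[F] V) ∘ₗ f ∈ C t := by
      intro f hf
      rw [hmemC] at hf ⊢
      intro j hj x hx
      exact hφS j hj _ (hf j hj x hx)
    have hR : ∀ f ∈ C t, f ∘ₗ (Φ i : V →ₗ[F] V) ∈ C t := by
      intro f hf
      rw [hmemC] at hf ⊢
      intro j hj x hx
      exact hf j hj _ (hφS j hj x hx)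
    have hdisj : (S i).map (Φ i : V →ₗ[F] V) ⊓ S i = ⊥ := h2 i
    have hsup : S i ⊔ (S i).map (Φ i : V →ₗ[F] V) = ⊤ := by
      apply Submodule.eq_top_of_finrank_eq
      have hG := Submodule.finrank_sup_add_finrank_inf_eq (S i)
        ((S i).map (Φ i : V →ₗ[F] V))
      rw [inf_comm, h2 i, finrank_bot, add_zero, LinearEquiv.finrank_map_eq,
        hSdim i] at hG
      rw [hdim, hG]
      obtain ⟨c, hc⟩ := hℓeven
      omega
    have hC1 : C (t + 1) = C t ⊓ Stmt4Aux.stab (S i) := by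
      apply le_antisymm
      · refine le_inf ?_ ?_
        · intro f hf
          refine (hmemC t f).mpr ?_
          intro j hj
          exact (hmemC (t + 1) f).mp hf j (by omega)
        · intro f hf
          intro x hx
          exact (hmemC (t + 1) f).mp hf i (Nat.lt_succ_self t) x hx
      · intro f hf
        rcases hf with ⟨hfC, hfs⟩
        have hfC' := (hmemC t f).mp hfC
        refine (hmemC (t + 1) f).mpr ?_
        intro j hj x hx
        by_cases hji : j = i
        · rw [hji] at hx ⊢
          exact hfs x hx
        · have : (j : ℕ) < t := by
            have : (j : ℕ) ≠ t := by
              intro h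
              exact hji (Fin.ext (by rw [h, hi]))
            omega
          exact hfC' j this x hx
    rw [hC1]
    exact Stmt4Aux.step (Φ i) (S i) (C t) hL hR hdisj hsup
  -- iterating the step
  have hiter : ∀ t, t ≤ k →
      4 ^ t * finrank F ↥(C t) ≤ 3 ^ t * finrank F ↥(C 0) := by
    intro t
    induction t with
    | zero => intro _; simp
    | succ t ih =>
      intro ht
      have ht' : t < k := by omega
      have h4 := hstep t ht'
      have ihh := ih (by omega)
      calc 4 ^ (t + 1) * finrank F ↥(C (t + 1))
          = 4 ^ t * (4 * finrank F ↥(C (t + 1))) := by ring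
        _ ≤ 4 ^ t * (3 * finrank F ↥(C t)) := Nat.mul_le_mul_left _ h4
        _ = 3 * (4 ^ t * finrank F ↥(C t)) := by ring
        _ ≤ 3 * (3 ^ t * finrank F ↥(C 0)) := Nat.mul_le_mul_left _ ihh
        _ = 3 ^ (t + 1) * finrank F ↥(C 0) := by ring
  -- evaluating the ends of the chain
  have hC0 : finrank F ↥(C 0) = ℓ * ℓ := by
    have htop : C 0 = ⊤ := by
      rw [eq_top_iff]
      intro f _
      rw [hmemC]
      intro j hj
      exact absurd hj (by omega)
    rw [htop, finrank_top, Module.finrank_linearMap, hdim]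
  have hCk : 1 ≤ finrank F ↥(C k) := by
    have hVnt : Nontrivial V := by
      apply Module.nontrivial_of_finrank_pos (R := F)
      rw [hdim]; omega
    have hidmem : LinearMap.id (R := F) (M := V) ∈ C k := by
      rw [hmemC]
      intro j hj x hx
      simpa using hx
    have hidne : (⟨LinearMap.id, hidmem⟩ : ↥(C k)) ≠ 0 := by
      intro h
      obtain ⟨v, hv⟩ := exists_ne (0 : V)
      apply hv
      have := congrArg (fun g : ↥(C k) => (g : V →ₗ[F] V) v) h
      simpa using this
    have : Nontrivial ↥(C k) := ⟨_, 0, hidne⟩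
    have := Module.finrank_pos_iff (R := F) (M := ↥(C k)) |>.mpr this
    omega
  -- the numeric consequence : 2^k ≤ ℓ^8
  have hnat : 4 ^ k ≤ 3 ^ k * ℓ ^ 2 := by
    have h := hiter k le_rfl
    have h1' : 4 ^ k * 1 ≤ 4 ^ k * finrank F ↥(C k) := Nat.mul_le_mul_left _ hCk
    rw [hC0] at h
    have : ℓ * ℓ = ℓ ^ 2 := by ring
    rw [this] at h
    omega
  have h2k : 2 ^ k ≤ ℓ ^ 8 := by
    have hp : (4 ^ k) ^ 4 ≤ (3 ^ k * ℓ ^ 2) ^ 4 := Nat.pow_le_pow_left hnat 4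
    have e1 : (4 ^ k) ^ 4 = 256 ^ k := by
      rw [← pow_mul, mul_comm, pow_mul]
      norm_num
    have e2 : (3 ^ k * ℓ ^ 2) ^ 4 = 81 ^ k * ℓ ^ 8 := by
      rw [mul_pow, ← pow_mul, ← pow_mul, mul_comm k 4, pow_mul]
      norm_num
    have e3 : 2 ^ k * 81 ^ k = 162 ^ k := by
      rw [← mul_pow]
      norm_num
    have e4 : (162 : ℕ) ^ k ≤ 256 ^ k := Nat.pow_le_pow_left (by norm_num) k
    have h5 : 2 ^ k * 81 ^ k ≤ 81 ^ k * ℓ ^ 8 := by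
      calc 2 ^ k * 81 ^ k = 162 ^ k := e3
        _ ≤ 256 ^ k := e4
        _ = (4 ^ k) ^ 4 := e1.symm
        _ ≤ (3 ^ k * ℓ ^ 2) ^ 4 := hp
        _ = 81 ^ k * ℓ ^ 8 := e2
    have h5' : 2 ^ k * 81 ^ k ≤ ℓ ^ 8 * 81 ^ k := by
      calc 2 ^ k * 81 ^ k ≤ 81 ^ k * ℓ ^ 8 := h5
        _ = ℓ ^ 8 * 81 ^ k := mul_comm _ _
    have h81 : 0 < 81 ^ k := pow_pos (by norm_num) k
    exact Nat.le_of_mul_le_mul_right h5' h81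
  -- from naturals to the real logarithm
  have hcast : ((2 : ℝ)) ^ k ≤ (ℓ : ℝ) ^ 8 := by exact_mod_cast h2k
  have hk8 : (k : ℝ) ≤ 8 * Real.logb 2 ℓ := by
    have hkey : Real.logb 2 ((2 : ℝ) ^ k) = k := by
      rw [Real.logb_pow, Real.logb_self_eq_one one_lt_two, mul_one]
    have hmono : Real.logb 2 ((2 : ℝ) ^ k) ≤ Real.logb 2 ((ℓ : ℝ) ^ 8) :=
      Real.logb_le_logb_of_le one_lt_two (by positivity) hcast
    have hfin : Real.logb 2 ((ℓ : ℝ) ^ 8) = 8 * Real.logb 2 ℓ := by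
      rw [Real.logb_pow]
      norm_num
    rw [hkey, hfin] at hmono
    exact hmono
  exact le_trans hk8 (le_max_right _ _)
end

section
/- Suppose Φ_1, …, Φ_k and S_1, …, S_k satisfy the (r = 2) subspace conditions. Then for every n ≥ 1 and every choice of n distinct indices i_1, …, i_n in {1,…,k}, the dimension of the sum of the corresponding subspaces satisfies dim_F(S_{i_1} + S_{i_2} + … + S_{i_n}) ≥ (1 − 2^{−n})·ℓ. -/
lemma iSup_fin_succ_split {α : Type*} [CompleteLattice α] (n : ℕ) (f : Fin (n+1) → α) :
    (⨆ j : Fin (n+1), f j) = (⨆ j : Fin n, f j.castSucc) ⊔ f (Fin.last n) := by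
  apply le_antisymm
  · exact iSup_le fun j => Fin.lastCases le_sup_right
      (fun i => le_sup_of_le_left (le_iSup (fun j : Fin n => f j.castSucc) i)) j
  · exact sup_le (iSup_le fun i => le_iSup f i.castSucc) (le_iSup f (Fin.last n))

/-- Under the (r = 2) subspace conditions, for every `n ≥ 1` and every
choice of `n` distinct indices `i₁, …, iₙ ∈ {1,…,k}`,
`dim (S_{i₁} + … + S_{iₙ}) ≥ (1 − 2⁻ⁿ)·ℓ`. -/
theorem stmt6 (F : Type*) [Field F] (V : Type*) [AddCommGroup V] [Module F V]
    [FiniteDimensional F V] (ℓ : ℕ) (hℓeven : Even ℓ) (hℓpos : 0 < ℓ)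
    (hdim : Module.finrank F V = ℓ)
    (k : ℕ) (Φ : Fin k → V ≃ₗ[F] V) (S : Fin k → Submodule F V)
    (hSdim : ∀ i, Module.finrank F (S i) = ℓ / 2)
    (h1 : ∀ i j : Fin k, i ≠ j → (S i).map (Φ j : V →ₗ[F] V) = S i)
    (h2 : ∀ i : Fin k, (S i).map (Φ i : V →ₗ[F] V) ⊓ S i = ⊥)
    (n : ℕ) (hn : 1 ≤ n) (idx : Fin n → Fin k) (hinj : Function.Injective idx) :
    (1 - (1 / 2 : ℝ) ^ n) * ℓ ≤ (Module.finrank F ↥(⨆ j : Fin n, S (idx j)) : ℝ) := by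
  obtain ⟨m, rfl⟩ := hℓeven
  have hhalf : ((m + m) / 2 : ℕ) = m := by omega
  induction n with
  | zero => omega
  | succ n ih =>
    rcases Nat.eq_zero_or_pos n with hn0 | hn0
    · subst hn0
      have h0 : (⨆ j : Fin 1, S (idx j)) = S (idx 0) :=
        le_antisymm (iSup_le fun j => by rw [Subsingleton.elim j 0])
          (le_iSup (fun j : Fin 1 => S (idx j)) 0)
      rw [h0, hSdim, hhalf]
      push_cast
      nlinarith [Nat.cast_nonneg (α := ℝ) m]
    · -- inductive step
      set i : Fin k := idx (Fin.last n) with hi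
      set W : Submodule F V := ⨆ j : Fin n, S (idx j.castSucc) with hW
      have hsplit : (⨆ j : Fin (n+1), S (idx j)) = W ⊔ S i :=
        iSup_fin_succ_split n (fun j => S (idx j))
      have hIH : (1 - (1 / 2 : ℝ) ^ n) * (m + m) ≤ (Module.finrank F W : ℝ) :=
        by
          have h := ih hn0 (fun j => idx j.castSucc)
            (fun a b hab => Fin.castSucc_injective n (hinj hab))
          exact_mod_cast h
      have hmapW : W.map (Φ i : V →ₗ[F] V) = W := by
        rw [hW, Submodule.map_iSup]
        refine iSup_congr fun j => h1 _ _ (fun h => ?_)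
        exact (Fin.castSucc_lt_last j).ne (hinj h)
      set A : Submodule F V := W ⊓ S i with hA
      set B : Submodule F V := A.map (Φ i : V →ₗ[F] V) with hB
      have hBW : B ≤ W := hmapW ▸ Submodule.map_mono inf_le_left
      have hBS : B ≤ (S i).map (Φ i : V →ₗ[F] V) := Submodule.map_mono inf_le_right
      have hABbot : A ⊓ B = ⊥ := by
        refine le_antisymm ?_ bot_le
        calc A ⊓ B ≤ S i ⊓ (S i).map (Φ i : V →ₗ[F] V) :=
              inf_le_inf (inf_le_right) hBS
          _ = ⊥ := by rw [inf_comm]; exact h2 i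
      have hBA : Module.finrank F B = Module.finrank F A :=
        LinearEquiv.finrank_map_eq (Φ i) A
      have hsum : Module.finrank F A + Module.finrank F B ≤ Module.finrank F W := by
        have := Submodule.finrank_sup_add_finrank_inf_eq A B
        rw [hABbot, finrank_bot, add_zero] at this
        rw [← this]
        exact Submodule.finrank_mono (sup_le inf_le_left hBW)
      have hdimeq : Module.finrank F ↥(W ⊔ S i) + Module.finrank F A
          = Module.finrank F W + m := by
        have := Submodule.finrank_sup_add_finrank_inf_eq W (S i)
        rw [hSdim, hhalf] at this
        exact this
      rw [hsplit]
      have hA2 : 2 * (Module.finrank F A : ℝ) ≤ (Module.finrank F W : ℝ) := by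
        rw [hBA] at hsum; exact_mod_cast by omega
      have hde : (Module.finrank F ↥(W ⊔ S i) : ℝ) + Module.finrank F A
          = Module.finrank F W + m := by exact_mod_cast hdimeq
      have hp : (0 : ℝ) ≤ (1 / 2 : ℝ) ^ n := by positivity
      have hps : ((1:ℝ)/2)^(n+1) = (1/2)^n * (1/2) := pow_succ _ _
      push_cast
      rw [hps]
      nlinarith [Nat.cast_nonneg (α := ℝ) m]
end

section
/- Let V be a finite-dimensional vector space over a field F, let Φ be an invertible linear endomorphism of V, let S be a subspace of V with Φ(S) ⊆ S, and let W be a subspace of V with Φ(W) ∩ W = {0}. Then 2·dim_F(S ∩ W) ≤ dim_F(S). -/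
/-- If `Φ` is an invertible endomorphism of a finite-dimensional vector
space `V`, `S` a subspace with `Φ(S) ⊆ S`, and `W` a subspace with `Φ(W) ∩ W = {0}`,
then `2·dim (S ∩ W) ≤ dim S`. -/
theorem stmt7 (F : Type*) [Field F] (V : Type*) [AddCommGroup V] [Module F V]
    [FiniteDimensional F V] (Φ : V ≃ₗ[F] V) (S W : Submodule F V)
    (hS : S.map (Φ : V →ₗ[F] V) ≤ S)
    (hW : W.map (Φ : V →ₗ[F] V) ⊓ W = ⊥) :
    2 * Module.finrank F ↥(S ⊓ W) ≤ Module.finrank F ↥S := by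
  set U := S ⊓ W with hU
  have hUS : U.map (Φ : V →ₗ[F] V) ≤ S :=
    le_trans (Submodule.map_mono inf_le_left) hS
  have hinf : U.map (Φ : V →ₗ[F] V) ⊓ U = ⊥ := by
    rw [← le_bot_iff, ← hW]
    exact inf_le_inf (Submodule.map_mono inf_le_right) inf_le_right
  have hrank : Module.finrank F ↥(U.map (Φ : V →ₗ[F] V)) = Module.finrank F ↥U :=
    (LinearEquiv.finrank_map_eq Φ U)
  have h := Submodule.finrank_sup_add_finrank_inf_eq (U.map (Φ : V →ₗ[F] V)) U
  rw [hinf, hrank, finrank_bot, add_zero] at h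
  have hle : U.map (Φ : V →ₗ[F] V) ⊔ U ≤ S := sup_le hUS inf_le_left
  have := Submodule.finrank_mono hle
  omega
end

section
/- Suppose Φ_1, …, Φ_k and S_1, …, S_k satisfy the (r = 2) subspace conditions. If n is a positive integer with 2^n > ℓ (in particular n = log₂ℓ + 1 when ℓ is a power of 2), then for every choice of n distinct indices i_1, …, i_n in {1,…,k}, the sum S_{i_1} + S_{i_2} + … + S_{i_n} equals all of V. -/
/-- Under the (r = 2) subspace conditions, if `n ≥ 1` and `2ⁿ > ℓ`
(in particular `n = log₂ ℓ + 1` when `ℓ` is a power of 2), then for every choice of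
`n` distinct indices `i₁, …, iₙ ∈ {1,…,k}`, the sum `S_{i₁} + … + S_{iₙ}` is all of `V`. -/
theorem stmt8 (F : Type*) [Field F] (V : Type*) [AddCommGroup V] [Module F V]
    [FiniteDimensional F V] (ℓ : ℕ) (hℓeven : Even ℓ) (hℓpos : 0 < ℓ)
    (hdim : Module.finrank F V = ℓ)
    (k : ℕ) (Φ : Fin k → V ≃ₗ[F] V) (S : Fin k → Submodule F V)
    (hSdim : ∀ i, Module.finrank F (S i) = ℓ / 2)
    (h1 : ∀ i j : Fin k, i ≠ j → (S i).map (Φ j : V →ₗ[F] V) = S i)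
    (h2 : ∀ i : Fin k, (S i).map (Φ i : V →ₗ[F] V) ⊓ S i = ⊥)
    (n : ℕ) (hn : 1 ≤ n) (hpow : ℓ < 2 ^ n)
    (idx : Fin n → Fin k) (hinj : Function.Injective idx) :
    (⨆ j : Fin n, S (idx j)) = ⊤ := by
  classical
  have hℓ2 : ℓ / 2 * 2 = ℓ := Nat.div_mul_cancel hℓeven.two_dvd
  have key : ∀ t : Finset (Fin k),
      2 ^ t.card * (ℓ - Module.finrank F ↥(⨆ i ∈ t, S i)) ≤ ℓ := by
    intro t
    induction t using Finset.induction_on with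
    | empty => simp
    | @insert i t' hi ih =>
      set T : Submodule F V := ⨆ j ∈ t', S j with hT
      have hmapT : Submodule.map (Φ i : V →ₗ[F] V) T = T := by
        rw [hT, Submodule.map_iSup]
        refine iSup_congr fun j => ?_
        rw [Submodule.map_iSup]
        exact iSup_congr fun hj => h1 j i (fun hji => hi (hji ▸ hj))
      set W : Submodule F V := T ⊓ S i with hWdef
      have hWbot : W ⊓ Submodule.map (Φ i : V →ₗ[F] V) W = ⊥ := by
        have hle : W ⊓ Submodule.map (Φ i : V →ₗ[F] V) W ≤
            Submodule.map (Φ i : V →ₗ[F] V) (S i) ⊓ S i :=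
          le_inf (le_trans inf_le_right (Submodule.map_mono inf_le_right))
            (le_trans inf_le_left inf_le_right)
        exact le_bot_iff.mp (h2 i ▸ hle)
      have hWT : W ≤ T := inf_le_left
      have hWT' : Submodule.map (Φ i : V →ₗ[F] V) W ≤ T :=
        le_trans (Submodule.map_mono inf_le_left) (le_of_eq hmapT)
      have hww : Module.finrank F (Submodule.map (Φ i : V →ₗ[F] V) W) =
          Module.finrank F W := LinearEquiv.finrank_map_eq (Φ i) W
      have h2w : 2 * Module.finrank F W ≤ Module.finrank F T := by
        have hsup := Submodule.finrank_sup_add_finrank_inf_eq W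
          (Submodule.map (Φ i : V →ₗ[F] V) W)
        rw [hWbot] at hsup
        have hle : Module.finrank F ↥(W ⊔ Submodule.map (Φ i : V →ₗ[F] V) W) ≤
            Module.finrank F T := Submodule.finrank_mono (sup_le hWT hWT')
        simp only [finrank_bot] at hsup
        omega
      have hsum : Module.finrank F ↥(T ⊔ S i) + Module.finrank F W =
          Module.finrank F T + ℓ / 2 := by
        have := Submodule.finrank_sup_add_finrank_inf_eq T (S i)
        rw [hSdim i] at this
        exact this
      have hd'le : Module.finrank F ↥(T ⊔ S i) ≤ ℓ := by
        rw [← hdim]; exact Submodule.finrank_le _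
      have hcard : (insert i t').card = t'.card + 1 := Finset.card_insert_of_notMem hi
      have hsupins : (⨆ j ∈ insert i t', S j) = T ⊔ S i := by
        rw [Finset.iSup_insert, hT, sup_comm]
      rw [hcard, hsupins]
      have hstep : 2 * (ℓ - Module.finrank F ↥(T ⊔ S i)) ≤ ℓ - Module.finrank F T := by
        omega
      calc 2 ^ (t'.card + 1) * (ℓ - Module.finrank F ↥(T ⊔ S i))
          = 2 ^ t'.card * (2 * (ℓ - Module.finrank F ↥(T ⊔ S i))) := by ring
        _
          ≤ 2 ^ t'.card * (ℓ - Module.finrank F T) := Nat.mul_le_mul_left _ hstep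
        _ ≤ ℓ := ih
  have hEq : (⨆ i ∈ Finset.image idx Finset.univ, S i) = ⨆ j : Fin n, S (idx j) := by
    apply le_antisymm
    · refine iSup₂_le fun i hi => ?_
      obtain ⟨j, _, rfl⟩ := Finset.mem_image.mp hi
      exact le_iSup (fun j => S (idx j)) j
    · exact iSup_le fun j =>
        le_iSup₂ (f := fun i (_ : i ∈ Finset.image idx Finset.univ) => S i)
          (idx j) (Finset.mem_image_of_mem idx (Finset.mem_univ j))
  have hcard : (Finset.image idx Finset.univ).card = n := by
    rw [Finset.card_image_of_injective _ hinj, Finset.card_univ, Fintype.card_fin]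
  have hkey := key (Finset.image idx Finset.univ)
  rw [hcard, hEq] at hkey
  have hle : Module.finrank F ↥(⨆ j : Fin n, S (idx j)) ≤ ℓ := by
    rw [← hdim]; exact Submodule.finrank_le _
  have hzero : ℓ - Module.finrank F ↥(⨆ j : Fin n, S (idx j)) = 0 := by
    by_contra h
    have h1' : 1 ≤ ℓ - Module.finrank F ↥(⨆ j : Fin n, S (idx j)) := Nat.pos_of_ne_zero h
    have := Nat.mul_le_mul_left (2 ^ n) h1'
    omega
  apply Submodule.eq_top_of_finrank_eq
  omega
end

section
/- Let ℓ ≥ 2 and suppose Φ_1, …, Φ_k and S_1, …, S_k satisfy the (r = 2) subspace conditions. Let t = ⌊log₂ℓ⌋ + 1 and assume t divides k. Then 2^{k/t} ≤ ℓ², and hence k ≤ 2·(log₂ℓ)·(⌊log₂ℓ⌋ + 1) ≤ 2·(log₂ℓ)·(log₂ℓ + 1), where log₂ denotes the real base-2 logarithm. -/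
open Module Submodule

section OperatorSpaces

variable (F : Type*) [Field F] (V : Type*) [AddCommGroup V] [Module F V]

/-- The subspace of `End(V)` of operators mapping `N` into itself. -/
def presv (N : Submodule F V) : Submodule F (V →ₗ[F] V) where
  carrier := {T | ∀ x ∈ N, T x ∈ N}
  add_mem' := fun ha hb x hx => by
    simpa using N.add_mem (ha x hx) (hb x hx)
  zero_mem' := fun x hx => by simp
  smul_mem' := fun c a ha x hx => by simpa using N.smul_mem c (ha x hx)

/-- The subspace of `End(V)` of operators vanishing on `N`. -/
def annih (N : Submodule F V) : Submodule F (V →ₗ[F] V) where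
  carrier := {T | ∀ x ∈ N, T x = 0}
  add_mem' := fun ha hb x hx => by simp_all
  zero_mem' := fun x hx => by simp
  smul_mem' := fun c a ha x hx => by simp_all

@[simp] lemma mem_presv (N : Submodule F V) (T : V →ₗ[F] V) :
    T ∈ presv F V N ↔ ∀ x ∈ N, T x ∈ N := Iff.rfl

@[simp] lemma mem_annih (N : Submodule F V) (T : V →ₗ[F] V) :
    T ∈ annih F V N ↔ ∀ x ∈ N, T x = 0 := Iff.rfl

variable {k : ℕ} (S : Fin k → Submodule F V)

/-- The operators preserving the first `j` of the subspaces. -/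
def Wsp (j : ℕ) : Submodule F (V →ₗ[F] V) :=
  ⨅ (i : Fin k) (_ : (i : ℕ) < j), presv F V (S i)

lemma mem_Wsp (j : ℕ) (T : V →ₗ[F] V) :
    T ∈ Wsp F V S j ↔ ∀ i : Fin k, (i : ℕ) < j → ∀ x ∈ S i, T x ∈ S i := by
  simp [Wsp, Submodule.mem_iInf]

lemma Wsp_zero : Wsp F V S 0 = ⊤ := by
  ext T; simp [mem_Wsp]

lemma Wsp_mono {j j' : ℕ} (h : j ≤ j') : Wsp F V S j' ≤ Wsp F V S j := by
  intro T hT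
  rw [mem_Wsp] at hT ⊢
  exact fun i hi => hT i (lt_of_lt_of_le hi h)

lemma id_mem_Wsp (j : ℕ) : (LinearMap.id : V →ₗ[F] V) ∈ Wsp F V S j := by
  rw [mem_Wsp]; exact fun i _ x hx => hx

end OperatorSpaces

section MainStep

variable {F : Type*} [Field F] {V : Type*} [AddCommGroup V] [Module F V]
variable [FiniteDimensional F V]

/-- Key halving step: requiring invariance under one more subspace multiplies the
dimension of the operator space by at most `3/4`. -/
lemma step_ineq (ℓ : ℕ) (hℓeven : Even ℓ) (hdim : Module.finrank F V = ℓ)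
    {k : ℕ} (Φ : Fin k → V ≃ₗ[F] V) (S : Fin k → Submodule F V)
    (hSdim : ∀ i, Module.finrank F (S i) = ℓ / 2)
    (h1 : ∀ i j : Fin k, i ≠ j → (S i).map (Φ j : V →ₗ[F] V) = S i)
    (h2 : ∀ i : Fin k, (S i).map (Φ i : V →ₗ[F] V) ⊓ S i = ⊥)
    {j : ℕ} (hj : j < k) :
    4 * Module.finrank F (Wsp F V S (j + 1)) ≤ 3 * Module.finrank F (Wsp F V S j) := by
  classical
  let q : Fin k := ⟨j, hj⟩
  let Wj : Submodule F (V →ₗ[F] V) := Wsp F V S j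
  let W' : Submodule F (V →ₗ[F] V) := Wsp F V S (j + 1)
  let U : Submodule F (V →ₗ[F] V) := W' ⊓ annih F V (S q)
  let eL : (V →ₗ[F] V) ≃ₗ[F] (V →ₗ[F] V) :=
    LinearEquiv.arrowCongr (LinearEquiv.refl F V) (Φ q)
  let eR : (V →ₗ[F] V) ≃ₗ[F] (V →ₗ[F] V) :=
    LinearEquiv.arrowCongr (Φ q).symm (LinearEquiv.refl F V)
  have heL_apply : ∀ (T : V →ₗ[F] V) (x : V), eL T x = Φ q (T x) := by
    intro T x; simp [eL]
  have heR_apply : ∀ (T : V →ₗ[F] V) (x : V), eR T x = T (Φ q x) := by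
    intro T x; simp [eR]
  have hfix : ∀ i : Fin k, (i : ℕ) < j → ∀ x ∈ S i, (Φ q) x ∈ S i := by
    intro i hi x hx
    have hne : i ≠ q := by
      intro h
      have : (i : ℕ) = j := by rw [h]
      omega
    rw [← h1 i q hne]
    exact Submodule.mem_map_of_mem hx
  have hW'leWj : W' ≤ Wj := Wsp_mono F V S (Nat.le_succ j)
  have hUleW' : U ≤ W' := inf_le_left
  -- (1) left composition
  have hLle : Submodule.map (eL : (V →ₗ[F] V) →ₗ[F] (V →ₗ[F] V)) W' ≤ Wj := by
    intro X hX
    obtain ⟨T, hT, rfl⟩ := Submodule.mem_map.mp hX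
    have hT' : T ∈ Wsp F V S (j + 1) := hT
    rw [mem_Wsp] at hT'
    show (eL : (V →ₗ[F] V) →ₗ[F] (V →ₗ[F] V)) T ∈ Wsp F V S j
    rw [mem_Wsp]
    intro i hi x hx
    have : (eL : (V →ₗ[F] V) →ₗ[F] (V →ₗ[F] V)) T x = Φ q (T x) := heL_apply T x
    rw [this]
    exact hfix i hi _ (hT' i (Nat.lt_succ_of_lt hi) x hx)
  have hLinf : W' ⊓ Submodule.map (eL : (V →ₗ[F] V) →ₗ[F] (V →ₗ[F] V)) W' ≤ U := by
    rintro X ⟨hX1, hX2⟩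
    obtain ⟨T, hT, rfl⟩ := Submodule.mem_map.mp hX2
    refine ⟨hX1, ?_⟩
    intro x hx
    set X := (eL : (V →ₗ[F] V) →ₗ[F] (V →ₗ[F] V)) T with hXdef
    have hmem1 : X x ∈ S q := by
      have hX1' : X ∈ Wsp F V S (j + 1) := hX1
      rw [mem_Wsp] at hX1'
      exact hX1' q (by simp [q]) x hx
    have hmem2 : X x ∈ (S q).map (Φ q : V →ₗ[F] V) := by
      have hT' : T ∈ Wsp F V S (j + 1) := hT
      rw [mem_Wsp] at hT'
      have : X x = Φ q (T x) := heL_apply T x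
      rw [this]
      exact Submodule.mem_map_of_mem (hT' q (by simp [q]) x hx)
    have hbot : X x ∈ (S q).map (Φ q : V →ₗ[F] V) ⊓ S q := ⟨hmem2, hmem1⟩
    rw [h2 q] at hbot
    simpa using hbot
  -- (2) right composition on U
  have hRle : Submodule.map (eR : (V →ₗ[F] V) →ₗ[F] (V →ₗ[F] V)) U ≤ Wj := by
    intro X hX
    obtain ⟨T, hT, rfl⟩ := Submodule.mem_map.mp hX
    have hT' : T ∈ Wsp F V S (j + 1) := hT.1
    rw [mem_Wsp] at hT'
    show (eR : (V →ₗ[F] V) →ₗ[F] (V →ₗ[F] V)) T ∈ Wsp F V S j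
    rw [mem_Wsp]
    intro i hi x hx
    have : (eR : (V →ₗ[F] V) →ₗ[F] (V →ₗ[F] V)) T x = T (Φ q x) := heR_apply T x
    rw [this]
    exact hT' i (Nat.lt_succ_of_lt hi) _ (hfix i hi x hx)
  have hhalf : ℓ / 2 + ℓ / 2 = ℓ := by
    obtain ⟨c, hc⟩ := hℓeven; omega
  -- V = S q ⊕ (Φ q)⁻¹(S q)
  have hdisj2 : Disjoint (S q) ((S q).comap (Φ q : V →ₗ[F] V)) := by
    rw [disjoint_iff, eq_bot_iff]
    rintro x ⟨hx1, hx2⟩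
    have hmx : Φ q x ∈ (S q).map (Φ q : V →ₗ[F] V) ⊓ S q :=
      ⟨Submodule.mem_map_of_mem hx1, hx2⟩
    rw [h2 q] at hmx
    have : Φ q x = 0 := by simpa using hmx
    have : x = 0 := by
      have := congrArg (Φ q).symm this
      simpa using this
    simp [this]
  have hcomap_eq : (S q).comap (Φ q : V →ₗ[F] V) = (S q).map ((Φ q).symm : V →ₗ[F] V) := by
    ext x
    constructor
    · intro hx
      exact ⟨Φ q x, hx, by simp⟩
    · rintro ⟨y, hy, rfl⟩
      simpa using hy
  have hsup_top : (S q) ⊔ (S q).comap (Φ q : V →ₗ[F] V) = ⊤ := by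
    apply Submodule.eq_top_of_disjoint
    · rw [hcomap_eq, LinearEquiv.finrank_map_eq (Φ q).symm (S q), hSdim q, hdim]
      exact hhalf.ge
    · exact hdisj2
  have hRinf : U ⊓ Submodule.map (eR : (V →ₗ[F] V) →ₗ[F] (V →ₗ[F] V)) U = ⊥ := by
    rw [eq_bot_iff]
    rintro X ⟨hX1, hX2⟩
    obtain ⟨T, hT, rfl⟩ := Submodule.mem_map.mp hX2
    set X := (eR : (V →ₗ[F] V) →ₗ[F] (V →ₗ[F] V)) T with hXdef
    have hann1 : ∀ x ∈ S q, X x = 0 := hX1.2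
    have hann2 : ∀ x ∈ (S q).comap (Φ q : V →ₗ[F] V), X x = 0 := by
      intro x hx
      have : X x = T (Φ q x) := heR_apply T x
      rw [this]
      exact hT.2 _ hx
    have : X = 0 := by
      apply LinearMap.ext
      intro v
      have hv : v ∈ (S q) ⊔ (S q).comap (Φ q : V →ₗ[F] V) := by
        rw [hsup_top]; trivial
      obtain ⟨y, hy, z, hz, rfl⟩ := Submodule.mem_sup.mp hv
      simp [map_add, hann1 y hy, hann2 z hz]
    simp [this]
  -- dimension counting
  have frL : Module.finrank F (Submodule.map (eL : (V →ₗ[F] V) →ₗ[F] (V →ₗ[F] V)) W')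
      = Module.finrank F W' := LinearEquiv.finrank_map_eq eL W'
  have frR : Module.finrank F (Submodule.map (eR : (V →ₗ[F] V) →ₗ[F] (V →ₗ[F] V)) U)
      = Module.finrank F U := LinearEquiv.finrank_map_eq eR U
  have key1 : 2 * Module.finrank F W' ≤ Module.finrank F Wj + Module.finrank F U := by
    have hsum := Submodule.finrank_sup_add_finrank_inf_eq W'
      (Submodule.map (eL : (V →ₗ[F] V) →ₗ[F] (V →ₗ[F] V)) W')
    have hle1 : Module.finrank F
        ↑(W' ⊔ Submodule.map (eL : (V →ₗ[F] V) →ₗ[F] (V →ₗ[F] V)) W')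
        ≤ Module.finrank F Wj :=
      Submodule.finrank_mono (sup_le hW'leWj hLle)
    have hle2 : Module.finrank F
        ↑(W' ⊓ Submodule.map (eL : (V →ₗ[F] V) →ₗ[F] (V →ₗ[F] V)) W')
        ≤ Module.finrank F U :=
      Submodule.finrank_mono hLinf
    omega
  have key2 : 2 * Module.finrank F U ≤ Module.finrank F Wj := by
    have hsum := Submodule.finrank_sup_add_finrank_inf_eq U
      (Submodule.map (eR : (V →ₗ[F] V) →ₗ[F] (V →ₗ[F] V)) U)
    rw [hRinf] at hsum
    have hle1 : Module.finrank F
        ↑(U ⊔ Submodule.map (eR : (V →ₗ[F] V) →ₗ[F] (V →ₗ[F] V)) U)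
        ≤ Module.finrank F Wj :=
      Submodule.finrank_mono (sup_le (le_trans hUleW' hW'leWj) hRle)
    have : Module.finrank F (⊥ : Submodule F (V →ₗ[F] V)) = 0 := finrank_bot F _
    omega
  show 4 * Module.finrank F W' ≤ 3 * Module.finrank F Wj
  omega

/-- Iterating the halving step. -/
lemma chain_ineq (ℓ : ℕ) (hℓeven : Even ℓ) (hdim : Module.finrank F V = ℓ)
    {k : ℕ} (Φ : Fin k → V ≃ₗ[F] V) (S : Fin k → Submodule F V)
    (hSdim : ∀ i, Module.finrank F (S i) = ℓ / 2)
    (h1 : ∀ i j : Fin k, i ≠ j → (S i).map (Φ j : V →ₗ[F] V) = S i)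
    (h2 : ∀ i : Fin k, (S i).map (Φ i : V →ₗ[F] V) ⊓ S i = ⊥) :
    ∀ j ≤ k, 4 ^ j * Module.finrank F (Wsp F V S j)
      ≤ 3 ^ j * Module.finrank F (Wsp F V S 0) := by
  intro j
  induction j with
  | zero => intro _; simp
  | succ n ih =>
    intro hnk
    have hn : n < k := hnk
    have hstep := step_ineq ℓ hℓeven hdim Φ S hSdim h1 h2 hn
    have ih' := ih (Nat.le_of_lt hn)
    calc 4 ^ (n + 1) * Module.finrank F (Wsp F V S (n + 1))
        = 4 ^ n * (4 * Module.finrank F (Wsp F V S (n + 1))) := by ring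
      _ ≤ 4 ^ n * (3 * Module.finrank F (Wsp F V S n)) :=
          Nat.mul_le_mul_left _ hstep
      _ = 3 * (4 ^ n * Module.finrank F (Wsp F V S n)) := by ring
      _ ≤ 3 * (3 ^ n * Module.finrank F (Wsp F V S 0)) := Nat.mul_le_mul_left _ ih'
      _ = 3 ^ (n + 1) * Module.finrank F (Wsp F V S 0) := by ring

/-- The fundamental inequality `4^k ≤ 3^k · ℓ²`. -/
lemma main_ineq (ℓ : ℕ) (hℓ2 : 2 ≤ ℓ) (hℓeven : Even ℓ)
    (hdim : Module.finrank F V = ℓ)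
    {k : ℕ} (Φ : Fin k → V ≃ₗ[F] V) (S : Fin k → Submodule F V)
    (hSdim : ∀ i, Module.finrank F (S i) = ℓ / 2)
    (h1 : ∀ i j : Fin k, i ≠ j → (S i).map (Φ j : V →ₗ[F] V) = S i)
    (h2 : ∀ i : Fin k, (S i).map (Φ i : V →ₗ[F] V) ⊓ S i = ⊥) :
    4 ^ k ≤ 3 ^ k * ℓ ^ 2 := by
  have hchain := chain_ineq ℓ hℓeven hdim Φ S hSdim h1 h2 k le_rfl
  have hW0 : Module.finrank F (Wsp F V S 0) = ℓ * ℓ := by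
    rw [Wsp_zero, finrank_top, Module.finrank_linearMap, hdim]
  have hWk : 1 ≤ Module.finrank F (Wsp F V S k) := by
    have hnontriv : Nontrivial V := by
      apply Module.nontrivial_of_finrank_pos (R := F)
      omega
    obtain ⟨v, hv⟩ := exists_ne (0 : V)
    have hid : (LinearMap.id : V →ₗ[F] V) ≠ 0 := by
      intro h
      exact hv (by simpa using LinearMap.congr_fun h v)
    have hne : Wsp F V S k ≠ ⊥ := by
      intro h
      have := id_mem_Wsp F V S k
      rw [h, Submodule.mem_bot] at this
      exact hid this
    have hfr : Module.finrank F (Wsp F V S k) ≠ 0 :=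
      fun h0 => hne (Submodule.finrank_eq_zero.mp h0)
    omega
  calc 4 ^ k = 4 ^ k * 1 := by ring
    _ ≤ 4 ^ k * Module.finrank F (Wsp F V S k) := Nat.mul_le_mul_left _ hWk
    _ ≤ 3 ^ k * Module.finrank F (Wsp F V S 0) := hchain
    _ = 3 ^ k * ℓ ^ 2 := by rw [hW0]; ring

end MainStep

/-- `2·3^t ≤ 4^t` for `t ≥ 3`. -/
lemma two_mul_three_pow_le (t : ℕ) (ht : 3 ≤ t) : 2 * 3 ^ t ≤ 4 ^ t := by
  induction t, ht using Nat.le_induction with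
  | base => norm_num
  | succ n hn ih =>
    calc 2 * 3 ^ (n + 1) = 3 * (2 * 3 ^ n) := by ring
      _ ≤ 3 * 4 ^ n := Nat.mul_le_mul_left _ ih
      _ ≤ 4 * 4 ^ n := Nat.mul_le_mul_right _ (by norm_num)
      _ = 4 ^ (n + 1) := by ring

lemma ell_two_k_le (k : ℕ) (h : 4 ^ k ≤ 3 ^ k * 4) : k ≤ 4 := by
  by_contra hc
  push_neg at hc
  have key : ∀ n, 5 ≤ n → 3 ^ n * 4 < 4 ^ n := by
    intro n hn
    induction n, hn using Nat.le_induction with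
    | base => norm_num
    | succ m hm ih =>
      calc 3 ^ (m + 1) * 4 = 3 * (3 ^ m * 4) := by ring
        _ < 3 * 4 ^ m := by omega
        _ ≤ 4 * 4 ^ m := Nat.mul_le_mul_right _ (by norm_num)
        _ = 4 ^ (m + 1) := by ring
  exact absurd h (Nat.not_le.mpr (key k hc))

/-- Under the (r = 2) subspace conditions with `ℓ ≥ 2`, if
`t = ⌊log₂ ℓ⌋ + 1` divides `k`, then `2^(k/t) ≤ ℓ²`, and hence
`k ≤ 2·(log₂ ℓ)·(⌊log₂ ℓ⌋ + 1) ≤ 2·(log₂ ℓ)·(log₂ ℓ + 1)` (real base-2 logarithm). -/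
theorem stmt9 (F : Type*) [Field F] (V : Type*) [AddCommGroup V] [Module F V]
    [FiniteDimensional F V] (ℓ : ℕ) (hℓ2 : 2 ≤ ℓ) (hℓeven : Even ℓ)
    (hdim : Module.finrank F V = ℓ)
    (k : ℕ) (Φ : Fin k → V ≃ₗ[F] V) (S : Fin k → Submodule F V)
    (hSdim : ∀ i, Module.finrank F (S i) = ℓ / 2)
    (h1 : ∀ i j : Fin k, i ≠ j → (S i).map (Φ j : V →ₗ[F] V) = S i)
    (h2 : ∀ i : Fin k, (S i).map (Φ i : V →ₗ[F] V) ⊓ S i = ⊥)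
    (hdvd : (Nat.log 2 ℓ + 1) ∣ k) :
    2 ^ (k / (Nat.log 2 ℓ + 1)) ≤ ℓ ^ 2 ∧
      (k : ℝ) ≤ 2 * Real.logb 2 ℓ * (Nat.log 2 ℓ + 1) ∧
      2 * Real.logb 2 ℓ * ((Nat.log 2 ℓ : ℝ) + 1) ≤
        2 * Real.logb 2 ℓ * (Real.logb 2 ℓ + 1) := by
  have hmain : 4 ^ k ≤ 3 ^ k * ℓ ^ 2 :=
    main_ineq ℓ hℓ2 hℓeven hdim Φ S hSdim h1 h2
  set n := Nat.log 2 ℓ with hn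
  set t := n + 1 with ht
  set m := k / t with hm
  have hk : t * m = k := Nat.mul_div_cancel' hdvd
  -- Part 1
  have part1 : 2 ^ m ≤ ℓ ^ 2 := by
    rcases Nat.lt_or_ge ℓ 4 with hℓ4 | hℓ4
    · -- ℓ = 2 (ℓ = 3 is odd)
      have hℓeq : ℓ = 2 := by
        rcases Nat.even_iff.mp hℓeven with h
        omega
      subst hℓeq
      have hlog : Nat.log 2 2 = 1 :=
        Nat.log_eq_of_pow_le_of_lt_pow (by norm_num) (by norm_num)
      have ht2 : t = 2 := by omega
      have hk4 : k ≤ 4 := by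
        apply ell_two_k_le
        calc 4 ^ k ≤ 3 ^ k * 2 ^ 2 := hmain
          _ = 3 ^ k * 4 := by norm_num
      have hm2 : m ≤ 2 := by
        rw [hm, ht2]
        omega
      calc 2 ^ m ≤ 2 ^ 2 := Nat.pow_le_pow_right (by norm_num) hm2
        _ = 2 ^ 2 := rfl
    · -- ℓ ≥ 4, so t ≥ 3
      have hn2 : 2 ≤ n := by
        rw [hn]
        exact Nat.le_log_of_pow_le (by norm_num) (by norm_num; omega)
      have ht3 : 3 ≤ t := by omega
      have h43 : 2 * 3 ^ t ≤ 4 ^ t := two_mul_three_pow_le t ht3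
      have hineq : 2 ^ m * 3 ^ k ≤ ℓ ^ 2 * 3 ^ k := by
        calc 2 ^ m * 3 ^ k = 2 ^ m * 3 ^ (t * m) := by rw [hk]
          _ = 2 ^ m * (3 ^ t) ^ m := by rw [pow_mul]
          _ = (2 * 3 ^ t) ^ m := by rw [mul_pow]
          _ ≤ (4 ^ t) ^ m := Nat.pow_le_pow_left h43 m
          _ = 4 ^ (t * m) := by rw [pow_mul]
          _ = 4 ^ k := by rw [hk]
          _ ≤ 3 ^ k * ℓ ^ 2 := hmain
          _ = ℓ ^ 2 * 3 ^ k := by ring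
      exact Nat.le_of_mul_le_mul_right hineq (Nat.pow_pos (by norm_num))
  refine ⟨part1, ?_, ?_⟩
  -- auxiliary real facts
  have hℓR : (1 : ℝ) ≤ (ℓ : ℝ) := by exact_mod_cast Nat.one_le_of_lt hℓ2
  have hlogb_nonneg : 0 ≤ Real.logb 2 (ℓ : ℝ) := Real.logb_nonneg one_lt_two hℓR
  · -- Part 2 : k ≤ 2 logb 2 ℓ * (n+1)
    have h2m : ((2 : ℝ)) ^ m ≤ ((ℓ : ℝ)) ^ 2 := by exact_mod_cast part1
    have hmR : (m : ℝ) ≤ 2 * Real.logb 2 (ℓ : ℝ) := by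
      have hlog := Real.logb_le_logb_of_le one_lt_two (by positivity) h2m
      rw [Real.logb_pow, Real.logb_pow, Real.logb_self_eq_one (by norm_num)] at hlog
      simpa using hlog
    have hkR : (k : ℝ) = (m : ℝ) * ((n : ℝ) + 1) := by
      rw [← hk]
      rw [ht]
      push_cast
      ring
    rw [hkR]
    calc (m : ℝ) * ((n : ℝ) + 1) ≤ (2 * Real.logb 2 (ℓ : ℝ)) * ((n : ℝ) + 1) := by
          apply mul_le_mul_of_nonneg_right hmR
          positivity
      _ = 2 * Real.logb 2 (ℓ : ℝ) * ((n : ℝ) + 1) := by ring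
  · -- Part 3
    have hpow : ((2 : ℝ)) ^ n ≤ (ℓ : ℝ) := by
      exact_mod_cast Nat.pow_log_le_self 2 (by omega : ℓ ≠ 0)
    have hnR : (n : ℝ) ≤ Real.logb 2 (ℓ : ℝ) := by
      have := Real.logb_le_logb_of_le one_lt_two (by positivity) hpow
      rw [Real.logb_pow, Real.logb_self_eq_one (by norm_num)] at this
      simpa using this
    apply mul_le_mul_of_nonneg_left _ (by linarith : (0:ℝ) ≤ 2 * Real.logb 2 (ℓ : ℝ))
    linarith
end

section
/- Suppose Φ_1, …, Φ_k and S_1, …, S_k satisfy the (r = 2) subspace conditions, and let O_1, …, O_t be a partition of {1,…,k} into t sets of equal size. Let Γ = {(i_1,…,i_t) ∈ O_1 × O_2 × … × O_t : S_{i_1} ∩ S_{i_2} ∩ … ∩ S_{i_t} ≠ {0}}. For each tuple v = (i_1,…,i_t) ∈ Γ let Π_v be the composition of Φ_{i_1}, Φ_{i_2}, …, Φ_{i_t} applied in that order (Φ_{i_1} first), i.e. the paper's product ∏_{j=1}^t Φ_{i_j}. Then the family {Π_v : v ∈ Γ} consists of |Γ| linearly independent endomorphisms of V. -/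
section Aux

variable {F : Type*} [Field F] {V : Type*} [AddCommGroup V] [Module F V]

/-- Product of a list of linear maps preserving a submodule preserves it. -/
lemma listProd_mem_aux (T : Submodule F V) :
    ∀ (L : List (V →ₗ[F] V)), (∀ f ∈ L, ∀ y ∈ T, f y ∈ T) → ∀ x ∈ T, L.prod x ∈ T := by
  intro L
  induction L with
  | nil => intro _ x hx; simpa using hx
  | cons f L ih =>
      intro h x hx
      rw [List.prod_cons, Module.End.mul_apply]
      exact h f (by simp) _ (ih (fun g hg => h g (by simp [hg])) x hx)

lemma iInf_fin_snoc {n : ℕ} (f : Fin (n + 1) → Submodule F V) :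
    (⨅ j, f j) = (⨅ j : Fin n, f j.castSucc) ⊓ f (Fin.last n) := by
  refine le_antisymm (le_inf (le_iInf fun j => iInf_le _ _) (iInf_le _ _)) (le_iInf fun j => ?_)
  induction j using Fin.lastCases with
  | last => exact inf_le_right
  | cast j => exact inf_le_left.trans (iInf_le _ j)

/-- splitting off the last coordinate of a tuple, as an equivalence -/
def snocEquivAux (n k : ℕ) : ((Fin n → Fin k) × Fin k) ≃ (Fin (n + 1) → Fin k) where
  toFun p := Fin.snoc p.1 p.2
  invFun v := (Fin.init v, v (Fin.last n))
  left_inv p := by simp [Fin.init_snoc, Fin.snoc_last]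
  right_inv v := by simp [Fin.snoc_init_self]

variable {k : ℕ} (Φ : Fin k → V ≃ₗ[F] V)

/-- the product `Φ_{v_{n-1}} ∘ ⋯ ∘ Φ_{v_0}` (apply `Φ_{v_0}` first). -/
noncomputable def PhiProd {n : ℕ} (v : Fin n → Fin k) : Module.End F V :=
  (List.ofFn (fun j : Fin n => ((Φ (v j) : V →ₗ[F] V)))).reverse.prod

lemma PProd_snoc {n : ℕ} (v' : Fin n → Fin k) (m : Fin k) :
    PhiProd Φ (Fin.snoc v' m) = ((Φ m : V →ₗ[F] V)) * PhiProd Φ v' := by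
  unfold PhiProd
  rw [List.ofFn_succ']
  simp only [Fin.snoc_castSucc, Fin.snoc_last, List.concat_eq_append,
    List.reverse_append, List.reverse_cons, List.reverse_nil, List.nil_append,
    List.singleton_append, List.prod_cons]

lemma PProd_mem {n : ℕ} (S : Fin k → Submodule F V)
    (h1 : ∀ i j : Fin k, i ≠ j → (S i).map (Φ j : V →ₗ[F] V) = S i)
    (i : Fin k) (v : Fin n → Fin k) (hv : ∀ j, v j ≠ i) (x : V) (hx : x ∈ S i) :
    PhiProd Φ v x ∈ S i := by
  refine listProd_mem_aux (S i) _ ?_ x hx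
  intro f hf y hy
  rw [List.mem_reverse, List.mem_ofFn] at hf
  obtain ⟨j, rfl⟩ := hf
  rw [← h1 i (v j) (fun h => hv j h.symm)]
  exact Submodule.mem_map_of_mem hy

/-- Main auxiliary induction. -/
lemma aux_ind (S : Fin k → Submodule F V)
    (h1 : ∀ i j : Fin k, i ≠ j → (S i).map (Φ j : V →ₗ[F] V) = S i)
    (h2 : ∀ i : Fin k, (S i).map (Φ i : V →ₗ[F] V) ⊓ S i = ⊥) :
    ∀ (n : ℕ) (O : Fin n → Finset (Fin k)),
      (∀ i j : Fin n, i ≠ j → Disjoint (O i) (O j)) →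
      ∀ (W : Submodule F V) (c : (Fin n → Fin k) → F),
      (∀ v, c v ≠ 0 → (∀ j, v j ∈ O j) ∧ (⨅ j, S (v j)) ⊓ W ≠ ⊥) →
      (∀ x ∈ W, ∑ v : Fin n → Fin k, c v • (PhiProd Φ v x) = 0) →
      ∀ v, c v = 0 := by
  intro n
  induction n with
  | zero =>
      intro O _ W c hsupp hrel v
      by_contra hv
      obtain ⟨-, hbot⟩ := hsupp v hv
      rw [iInf_of_empty, top_inf_eq] at hbot
      obtain ⟨x, hxW, hx0⟩ := Submodule.exists_mem_ne_zero_of_ne_bot hbot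
      have := hrel x hxW
      have hv0 : v = (fun j => j.elim0) := funext fun j => j.elim0
      rw [Fintype.sum_eq_single v (fun w hw => absurd (Subsingleton.elim w v) hw)] at this
      have : c v • x = 0 := by
        simpa [PhiProd] using this
      rcases smul_eq_zero.mp this with h | h
      · exact hv h
      · exact hx0 h
  | succ n ih =>
      intro O hdisj W c hsupp hrel v0
      by_contra hv0
      obtain ⟨hmem, -⟩ := hsupp v0 hv0
      set i := v0 (Fin.last n) with hi
      have hiO : i ∈ O (Fin.last n) := hmem _
      -- the coefficients with last coordinate `i`
      set c' : (Fin n → Fin k) → F := fun v' => c (Fin.snoc v' i) with hc'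
      -- any index appearing in a supported tuple at a non-last position differs from i
      have hne : ∀ (v' : Fin n → Fin k) (m : Fin k), c (Fin.snoc v' m) ≠ 0 →
          ∀ j : Fin n, v' j ≠ i := by
        intro v' m hc j hji
        have hall := (hsupp _ hc).1
        have hj : v' j ∈ O j.castSucc := by
          have := hall j.castSucc
          rwa [Fin.snoc_castSucc] at this
        have hd := hdisj j.castSucc (Fin.last n) (Fin.ne_last_of_lt j.castSucc_lt_last)
        exact (Finset.disjoint_left.mp hd hj) (hji ▸ hiO)
      have key : c' (Fin.init v0) = 0 := by
        refine ih (fun j => O j.castSucc)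
          (fun a b hab => hdisj _ _ (fun h => hab (Fin.castSucc_injective n h)))
          (W ⊓ S i) c' ?_ ?_ (Fin.init v0)
        · -- support condition
          intro v' hcv'
          obtain ⟨hall, hbot⟩ := hsupp _ hcv'
          constructor
          · intro j
            have := hall j.castSucc
            rwa [Fin.snoc_castSucc] at this
          · intro hb
            apply hbot
            rw [iInf_fin_snoc]
            simp only [Fin.snoc_castSucc, Fin.snoc_last]
            rw [inf_assoc, inf_comm (S i) W]
            exact hb
        · -- the relation on W ⊓ S i
          rintro x hx
          obtain ⟨hxW, hxS⟩ := Submodule.mem_inf.mp hx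
          have hrel0 := hrel x hxW
          -- reindex the sum over snoc
          have hsplit : ∑ p : (Fin n → Fin k) × Fin k,
              c (Fin.snoc p.1 p.2) • (PhiProd Φ (Fin.snoc p.1 p.2) x) = 0 := by
            rw [← hrel0]
            exact Fintype.sum_equiv (snocEquivAux n k) _ _ (fun p => rfl)
          rw [Fintype.sum_prod_type, Finset.sum_comm] at hsplit
          -- B m := the inner combination
          set B : Fin k → V := fun m => ∑ v' : Fin n → Fin k,
            c (Fin.snoc v' m) • (PhiProd Φ v' x) with hB
          have hsplit2 : ∑ m : Fin k, (Φ m) (B m) = 0 := by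
            rw [← hsplit]
            refine Finset.sum_congr rfl fun m _ => ?_
            rw [hB, map_sum]
            refine Finset.sum_congr rfl fun v' _ => ?_
            rw [map_smul, PProd_snoc, Module.End.mul_apply]
            rfl
          have hBmem : ∀ m, B m ∈ S i := by
            intro m
            refine Submodule.sum_mem _ fun v' _ => ?_
            by_cases hcz : c (Fin.snoc v' m) = 0
            · rw [hcz, zero_smul]; exact Submodule.zero_mem _
            · exact Submodule.smul_mem _ _
                (PProd_mem Φ S h1 i v' (hne v' m hcz) x hxS)
          -- Φ i (B i) lies in S i and in Φ i (S i), hence is 0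
          have hPhiBi : (Φ i) (B i) ∈ S i := by
            have h0 : (∑ m ∈ Finset.univ.erase i, (Φ m) (B m)) + (Φ i) (B i) = 0 := by
              rw [Finset.sum_erase_add Finset.univ _ (Finset.mem_univ i)]
              exact hsplit2
            rw [eq_neg_of_add_eq_zero_right h0]
            refine Submodule.neg_mem _ (Submodule.sum_mem _ fun m hm => ?_)
            have hmi : m ≠ i := (Finset.mem_erase.mp hm).1
            rw [← h1 i m (fun h => hmi h.symm)]
            exact Submodule.mem_map_of_mem (hBmem m)
          have hBz : B i = 0 := by
            have hmem2 : (Φ i) (B i) ∈ (S i).map (Φ i : V →ₗ[F] V) ⊓ S i :=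
              Submodule.mem_inf.mpr ⟨Submodule.mem_map_of_mem (hBmem i), hPhiBi⟩
            rw [h2 i, Submodule.mem_bot] at hmem2
            exact (LinearEquiv.map_eq_zero_iff (Φ i)).mp hmem2
          simpa [hB, hc'] using hBz
      apply hv0
      have key2 : c (Fin.snoc (Fin.init v0) i) = 0 := key
      rwa [hi, Fin.snoc_init_self] at key2

end Aux

/-- Under the (r = 2) subspace conditions, let `O₁, …, O_t` be a
partition of `{1,…,k}` into `t` sets of equal size, and let
`Γ = {(i₁,…,i_t) ∈ O₁ × ⋯ × O_t : S_{i₁} ∩ ⋯ ∩ S_{i_t} ≠ {0}}`. Then the compositions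
`Π_v = Φ_{i₁} ∘ … first, …, Φ_{i_t} last` for `v ∈ Γ` are `|Γ|` linearly independent
endomorphisms of `V`. -/
theorem stmt10 (F : Type*) [Field F] (V : Type*) [AddCommGroup V] [Module F V]
    [FiniteDimensional F V] (ℓ : ℕ) (hℓeven : Even ℓ) (hℓpos : 0 < ℓ)
    (hdim : Module.finrank F V = ℓ)
    (k : ℕ) (Φ : Fin k → V ≃ₗ[F] V) (S : Fin k → Submodule F V)
    (hSdim : ∀ i, Module.finrank F (S i) = ℓ / 2)
    (h1 : ∀ i j : Fin k, i ≠ j → (S i).map (Φ j : V →ₗ[F] V) = S i)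
    (h2 : ∀ i : Fin k, (S i).map (Φ i : V →ₗ[F] V) ⊓ S i = ⊥)
    (t : ℕ) (ht : 1 ≤ t) (O : Fin t → Finset (Fin k))
    (hdisj : ∀ i j : Fin t, i ≠ j → Disjoint (O i) (O j))
    (hcover : ∀ x : Fin k, ∃ i : Fin t, x ∈ O i)
    (hsize : ∀ i j : Fin t, (O i).card = (O j).card)
    (Pi : (Fin t → Fin k) → Module.End F V)
    (hPi : ∀ v : Fin t → Fin k,
      Pi v = (List.ofFn (fun j : Fin t => ((Φ (v j) : V →ₗ[F] V)))).reverse.prod) :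
    LinearIndependent F
      (fun v : {v : Fin t → Fin k // (∀ j, v j ∈ O j) ∧ (⨅ j : Fin t, S (v j)) ≠ ⊥} =>
        Pi v.val) := by
  classical
  set p : (Fin t → Fin k) → Prop :=
    fun v => (∀ j, v j ∈ O j) ∧ (⨅ j : Fin t, S (v j)) ≠ ⊥ with hp
  rw [Fintype.linearIndependent_iff]
  intro g hg s
  set c : (Fin t → Fin k) → F := fun v => if h : p v then g ⟨v, h⟩ else 0 with hc
  have hcall : ∀ v, c v = 0 := by
    refine aux_ind Φ S h1 h2 t O hdisj ⊤ c ?_ ?_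
    · intro v hv
      rw [hc] at hv
      by_cases h : p v
      · exact ⟨h.1, by rw [inf_top_eq]; exact h.2⟩
      · simp [h] at hv
    · intro x _
      have hx0 : (∑ v : {v // p v}, g v • Pi v.val) x = 0 := by rw [hg]; rfl
      rw [LinearMap.sum_apply] at hx0
      simp only [LinearMap.smul_apply] at hx0
      have e1 : ∑ v : Fin t → Fin k, c v • PhiProd Φ v x
          = ∑ v ∈ Finset.univ.filter p, c v • PhiProd Φ v x := by
        refine (Finset.sum_filter_of_ne fun v _ hne => ?_).symm
        by_contra hp'
        exact hne (by rw [hc]; simp [dif_neg (show ¬ p v from hp')])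
      have e2 : ∑ v ∈ Finset.univ.filter p, c v • PhiProd Φ v x
          = ∑ v : {v // p v}, c v.val • PhiProd Φ v.val x :=
        Finset.sum_subtype _ (fun v => by simp) _
      rw [e1, e2, ← hx0]
      refine Finset.sum_congr rfl fun v _ => ?_
      simp only [hc, dif_pos v.2, Subtype.coe_eta, hPi]
      rfl
  have h := hcall s.val
  simp only [hc, dif_pos s.2, Subtype.coe_eta] at h
  exact h
end

section
/- Suppose the endomorphisms A_{t,j} (t ∈ {1,…,r}, j ∈ {1,…,k}) and the subspaces S_1, …, S_k satisfy the r-parity subspace conditions. Then for every n ≥ 1 and every choice of n distinct indices i_1, …, i_n in {1,…,k}, dim_F(S_{i_1} + S_{i_2} + … + S_{i_n}) ≥ (1 − ((r−1)/r)^n)·ℓ. -/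
open Module Submodule

private lemma aux_sub {F V : Type*} [Field F] [AddCommGroup V] [Module F V]
    [FiniteDimensional F V] {ι : Type*} (W : Submodule F V) (X : ι → Submodule F V)
    (s : Finset ι) :
    finrank F ↥(W ⊔ s.sup X) + s.card * finrank F W ≤
      (∑ t ∈ s, finrank F ↥(W ⊔ X t)) + finrank F W := by
  classical
  induction s using Finset.induction with
  | empty => rw [Finset.sup_empty, sup_bot_eq]; simp
  | insert a s h ih =>
    rw [Finset.sup_insert, Finset.sum_insert h, Finset.card_insert_of_notMem h]
    have key : finrank F ↥((W ⊔ X a) ⊔ (W ⊔ s.sup X)) + finrank F ↥W ≤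
        finrank F ↥(W ⊔ X a) + finrank F ↥(W ⊔ s.sup X) := by
      have h1 := Submodule.finrank_sup_add_finrank_inf_eq (W ⊔ X a) (W ⊔ s.sup X)
      have hW : finrank F ↥W ≤ finrank F ↥((W ⊔ X a) ⊓ (W ⊔ s.sup X)) :=
        Submodule.finrank_mono (le_inf le_sup_left le_sup_left)
      omega
    have heq : W ⊔ (X a ⊔ s.sup X) = (W ⊔ X a) ⊔ (W ⊔ s.sup X) :=
      sup_sup_distrib_left _ _ _
    rw [heq, add_one_mul]
    linarith

private lemma key_ind {F V : Type*} [Field F] [AddCommGroup V] [Module F V]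
    [FiniteDimensional F V] {r : ℕ} (hr : 2 ≤ r) {ℓ : ℕ}
    (hdim : Module.finrank F V = ℓ)
    {k : ℕ} (A : Fin r → Fin k → V ≃ₗ[F] V) (S : Fin k → Submodule F V)
    (h1 : ∀ (t : Fin r) (i j : Fin k), i ≠ j → (S i).map (A t j : V →ₗ[F] V) = S i)
    (h2 : ∀ i : Fin k, (⨆ t : Fin r, (S i).map (A t i : V →ₗ[F] V)) = ⊤) :
    ∀ (n : ℕ) (idx : Fin n → Fin k), Function.Injective idx →
      (ℓ : ℝ) - (finrank F ↥(⨆ j : Fin n, S (idx j)) : ℝ) ≤ (((r:ℝ)-1)/r)^n * ℓ := by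
  intro n
  induction n with
  | zero =>
    intro idx _
    simp [iSup_of_empty]
  | succ n ih =>
    intro idx hinj
    set i := idx (Fin.last n) with hi
    set W : Submodule F V := ⨆ j : Fin n, S (idx j.castSucc) with hW
    have hsplit : (⨆ j : Fin (n+1), S (idx j)) = W ⊔ S i := by
      apply le_antisymm
      · apply iSup_le
        intro j
        rcases Fin.eq_castSucc_or_eq_last j with ⟨j', rfl⟩ | rfl
        · exact le_sup_of_le_left (le_iSup (fun j : Fin n => S (idx j.castSucc)) j')
        · exact le_sup_right
      · exact sup_le (iSup_le fun j' => le_iSup (fun j : Fin (n+1) => S (idx j)) j'.castSucc)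
          (le_iSup (fun j : Fin (n+1) => S (idx j)) (Fin.last n))
    have hmapW : ∀ t : Fin r, W.map (A t i : V →ₗ[F] V) = W := by
      intro t
      rw [hW, Submodule.map_iSup]
      exact iSup_congr fun j => h1 t (idx j.castSucc) i
        (hinj.ne (Fin.castSucc_lt_last j).ne)
    have hrank_each : ∀ t : Fin r,
        finrank F ↥(W ⊔ (S i).map (A t i : V →ₗ[F] V)) = finrank F ↥(W ⊔ S i) := by
      intro t
      have : (W ⊔ S i).map (A t i : V →ₗ[F] V) = W ⊔ (S i).map (A t i : V →ₗ[F] V) := by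
        rw [Submodule.map_sup, hmapW]
      rw [← this, LinearEquiv.finrank_map_eq]
    have hnat := aux_sub W (fun t : Fin r => (S i).map (A t i : V →ₗ[F] V)) Finset.univ
    rw [Finset.sup_univ_eq_iSup, h2 i, Finset.sum_congr rfl (fun t _ => hrank_each t),
      Finset.sum_const, Finset.card_univ, Fintype.card_fin, sup_top_eq, finrank_top,
      hdim, smul_eq_mul] at hnat
    -- hnat : ℓ + r * finrank W ≤ r * finrank (W ⊔ S i) + finrank W
    have ihv := ih (fun j => idx j.castSucc)
      (fun a b hab => Fin.castSucc_injective n (hinj hab))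
    rw [← hW] at ihv
    have hnatR : (ℓ : ℝ) + r * (finrank F ↥W : ℝ) ≤
        r * (finrank F ↥(W ⊔ S i) : ℝ) + (finrank F ↥W : ℝ) := by
      exact_mod_cast hnat
    rw [hsplit]
    have hr1 : (1:ℝ) ≤ (r:ℝ) - 1 := by
      have : (2:ℝ) ≤ (r:ℝ) := by exact_mod_cast hr
      linarith
    have hrpos : (0:ℝ) < (r:ℝ) := by linarith
    have hq : (((r:ℝ)-1)/r)^(n+1) * ℓ * r = ((r:ℝ)-1) * ((((r:ℝ)-1)/r)^n * ℓ) := by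
      have hc : ((r:ℝ)-1)/r * r = r - 1 := div_mul_cancel₀ _ hrpos.ne'
      rw [pow_succ]
      linear_combination ((((r:ℝ)-1)/r)^n * ℓ) * hc
    nlinarith [ihv, hnatR, hq, hrpos, hr1]

/-- Under the r-parity subspace conditions, for every `n ≥ 1` and every
choice of `n` distinct indices `i₁, …, iₙ ∈ {1,…,k}`,
`dim (S_{i₁} + … + S_{iₙ}) ≥ (1 − ((r−1)/r)ⁿ)·ℓ`. -/
theorem stmt11 (F : Type*) [Field F] (V : Type*) [AddCommGroup V] [Module F V]
    [FiniteDimensional F V] (r : ℕ) (hr : 2 ≤ r) (ℓ : ℕ) (hℓpos : 0 < ℓ)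
    (hrdvd : r ∣ ℓ) (hdim : Module.finrank F V = ℓ)
    (k : ℕ) (A : Fin r → Fin k → V ≃ₗ[F] V) (S : Fin k → Submodule F V)
    (hSdim : ∀ i, Module.finrank F (S i) = ℓ / r)
    (h1 : ∀ (t : Fin r) (i j : Fin k), i ≠ j → (S i).map (A t j : V →ₗ[F] V) = S i)
    (h2 : ∀ i : Fin k, (⨆ t : Fin r, (S i).map (A t i : V →ₗ[F] V)) = ⊤)
    (n : ℕ) (hn : 1 ≤ n) (idx : Fin n → Fin k) (hinj : Function.Injective idx) :
    (1 - (((r : ℝ) - 1) / r) ^ n) * ℓ ≤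
      (Module.finrank F ↥(⨆ j : Fin n, S (idx j)) : ℝ) := by
  have := key_ind hr hdim A S h1 h2 n idx hinj
  nlinarith [this]
end

section
/- Let V be a finite-dimensional vector space over a field F, let A_1, …, A_r be invertible linear endomorphisms of V, let S be a subspace of V with A_t(S) ⊆ S for every t in {1,…,r}, and let W be a subspace of V such that the family of subspaces A_1(W), A_2(W), …, A_r(W) is independent (their sum is a direct sum, i.e. each A_t(W) intersects the sum of the others only in {0}). Then r·dim_F(S ∩ W) ≤ dim_F(S). -/
open Module

lemma aux_sum_le {F V : Type*} [Field F] [AddCommGroup V] [Module F V] [FiniteDimensional F V]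
    {ι : Type*} (p : ι → Submodule F V) (hp : iSupIndep p) (s : Finset ι) :
    ∑ i ∈ s, finrank F (p i) ≤ finrank F (⨆ i ∈ s, p i : Submodule F V) := by
  classical
  induction s using Finset.induction with
  | empty => simp
  | @insert a s ha ih =>
    rw [Finset.sum_insert ha]
    have hsup : (⨆ i ∈ insert a s, p i : Submodule F V) = p a ⊔ ⨆ i ∈ s, p i := by
      simp [iSup_or, iSup_sup_eq]
    have hdisj : Disjoint (p a) (⨆ i ∈ s, p i : Submodule F V) := by
      refine (hp a).mono_right ?_
      exact iSup₂_le fun i hi => le_iSup₂_of_le i (fun h => (ha (h ▸ hi)).elim) le_rfl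
    have := Submodule.finrank_sup_add_finrank_inf_eq (p a) (⨆ i ∈ s, p i : Submodule F V)
    rw [hdisj.eq_bot] at this
    simp only [finrank_bot, add_zero] at this
    rw [hsup, this]
    exact Nat.add_le_add_left ih _

/-- If `A₁, …, A_r` are invertible endomorphisms of a finite-dimensional
vector space `V`, `S` a subspace with `A_t(S) ⊆ S` for every `t`, and `W` a subspace
such that the family `A₁(W), …, A_r(W)` is independent (each `A_t(W)` meets the sum of
the others only in `{0}`), then `r·dim (S ∩ W) ≤ dim S`. -/
theorem stmt12 (F : Type*) [Field F] (V : Type*) [AddCommGroup V] [Module F V]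
    [FiniteDimensional F V] (r : ℕ) (A : Fin r → V ≃ₗ[F] V) (S W : Submodule F V)
    (hS : ∀ t : Fin r, S.map (A t : V →ₗ[F] V) ≤ S)
    (hW : ∀ t : Fin r,
      (W.map (A t : V →ₗ[F] V)) ⊓
        (⨆ u : Fin r, ⨆ _ : u ≠ t, W.map (A u : V →ₗ[F] V)) = ⊥) :
    r * Module.finrank F ↥(S ⊓ W) ≤ Module.finrank F ↥S := by
  set T : Fin r → Submodule F V := fun t => (S ⊓ W).map (A t : V →ₗ[F] V) with hT
  have hWind : iSupIndep (fun t => W.map (A t : V →ₗ[F] V)) := fun t =>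
    disjoint_iff.mpr (hW t)
  have hTind : iSupIndep T := hWind.mono fun t => Submodule.map_mono inf_le_right
  have hTS : ∀ t, T t ≤ S := fun t =>
    le_trans (Submodule.map_mono inf_le_left) (hS t)
  have hTrank : ∀ t, finrank F (T t) = finrank F (S ⊓ W : Submodule F V) := fun t =>
    ((S ⊓ W).equivMapOfInjective _ (A t).injective).finrank_eq.symm
  calc r * finrank F (S ⊓ W : Submodule F V)
      = ∑ t : Fin r, finrank F (T t) := by simp [hTrank, Finset.sum_const]
    _ ≤ finrank F (⨆ t ∈ Finset.univ, T t : Submodule F V) := aux_sum_le T hTind _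
    _ ≤ finrank F S := Submodule.finrank_mono (by simpa using hTS)
end

section
/- Suppose the endomorphisms A_{t,j} (t ∈ {1,…,r}, j ∈ {1,…,k}) and the subspaces S_1, …, S_k satisfy the r-parity subspace conditions. If n is a positive integer with (r/(r−1))^n > ℓ (in particular n = ⌊log_δ ℓ⌋ + 1 with δ = r/(r−1)), then for every choice of n distinct indices i_1, …, i_n in {1,…,k}, the sum S_{i_1} + S_{i_2} + … + S_{i_n} equals all of V. -/
open Module Submodule

section aux
variable {F V : Type*} [Field F] [AddCommGroup V] [Module F V] [FiniteDimensional F V]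

lemma aux_quot (W U : Submodule F V) (h : W ≤ U) :
    finrank F (U.map W.mkQ) + finrank F W = finrank F U := by
  have h1 := LinearMap.finrank_range_add_finrank_ker (W.mkQ.domRestrict U)
  rw [LinearMap.range_domRestrict, LinearMap.ker_domRestrict, Submodule.ker_mkQ,
    (Submodule.comapSubtypeEquivOfLe h).finrank_eq] at h1
  exact h1

lemma aux_sup {ι : Type*} [DecidableEq ι] (s : Finset ι) (p : ι → Submodule F V) :
    finrank F (s.sup p : Submodule F V) ≤ ∑ i ∈ s, finrank F (p i) := by
  induction s using Finset.induction_on with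
  | empty => simp
  | insert _ _ hx ih =>
    rename_i a s
    rw [Finset.sup_insert, Finset.sum_insert hx]
    have h2 := Submodule.finrank_sup_add_finrank_inf_eq (p a) (s.sup p)
    omega
end aux

section key
variable {F V : Type*} [Field F] [AddCommGroup V] [Module F V] [FiniteDimensional F V]

lemma aux_key {r ℓ : ℕ} (hdim : finrank F V = ℓ) (T : Submodule F V)
    (B : Fin r → (V ≃ₗ[F] V)) (W : Submodule F V)
    (hW : ∀ t, W.map (B t : V →ₗ[F] V) = W)
    (htop : (⨆ t : Fin r, T.map (B t : V →ₗ[F] V)) = ⊤) :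
    ℓ + r * finrank F W ≤ r * finrank F ↥(W ⊔ T) + finrank F W := by
  classical
  set W' := W ⊔ T with hW'
  have hmap : ∀ t : Fin r, W'.map (B t : V →ₗ[F] V) = W ⊔ T.map (B t : V →ₗ[F] V) := by
    intro t; rw [hW', Submodule.map_sup, hW t]
  have htop' : (⨆ t : Fin r, W'.map (B t : V →ₗ[F] V)) = ⊤ := by
    apply top_unique
    rw [← htop]
    exact iSup_mono fun t => Submodule.map_mono le_sup_right
  set q : Fin r → Submodule F (V ⧸ W) := fun t => (W'.map (B t : V →ₗ[F] V)).map W.mkQ with hq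
  have hqtop : (⨆ t : Fin r, q t) = ⊤ := by
    rw [hq, ← Submodule.map_iSup, htop', Submodule.map_top, Submodule.range_mkQ]
  have hWle : ∀ t : Fin r, W ≤ W'.map (B t : V →ₗ[F] V) := by
    intro t; rw [hmap t]; exact le_sup_left
  have hr1 : ∀ t : Fin r, finrank F (q t) + finrank F W = finrank F W' := by
    intro t
    rw [hq]
    simp only
    rw [aux_quot W _ (hWle t)]
    exact LinearEquiv.finrank_map_eq (B t) W'
  have hsum : (∑ t : Fin r, finrank F (q t)) + r * finrank F W = r * finrank F W' := by
    have h := Finset.sum_congr rfl (fun t (_ : t ∈ Finset.univ) => hr1 t)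
    simp only [Finset.sum_add_distrib, Finset.sum_const, Finset.card_univ, Fintype.card_fin,
      smul_eq_mul] at h
    exact h
  have hquot : finrank F (V ⧸ W) + finrank F W = ℓ := by
    rw [Submodule.finrank_quotient_add_finrank W, hdim]
  have hle : finrank F (V ⧸ W) ≤ ∑ t : Fin r, finrank F (q t) := by
    calc finrank F (V ⧸ W) = finrank F (⊤ : Submodule F (V ⧸ W)) := (finrank_top F _).symm
      _ = finrank F (Finset.univ.sup q : Submodule F (V ⧸ W)) := by
          rw [Finset.sup_univ_eq_iSup, hqtop]
      _ ≤ ∑ t : Fin r, finrank F (q t) := aux_sup _ _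
  omega
end key

/-- Under the r-parity subspace conditions, if `n ≥ 1` and
`(r/(r−1))ⁿ > ℓ` (in particular `n = ⌊log_δ ℓ⌋ + 1` with `δ = r/(r−1)`), then for every
choice of `n` distinct indices `i₁, …, iₙ ∈ {1,…,k}`, the sum `S_{i₁} + … + S_{iₙ}`
is all of `V`. -/
theorem stmt13 (F : Type*) [Field F] (V : Type*) [AddCommGroup V] [Module F V]
    [FiniteDimensional F V] (r : ℕ) (hr : 2 ≤ r) (ℓ : ℕ) (hℓpos : 0 < ℓ)
    (hrdvd : r ∣ ℓ) (hdim : Module.finrank F V = ℓ)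
    (k : ℕ) (A : Fin r → Fin k → V ≃ₗ[F] V) (S : Fin k → Submodule F V)
    (hSdim : ∀ i, Module.finrank F (S i) = ℓ / r)
    (h1 : ∀ (t : Fin r) (i j : Fin k), i ≠ j → (S i).map (A t j : V →ₗ[F] V) = S i)
    (h2 : ∀ i : Fin k, (⨆ t : Fin r, (S i).map (A t i : V →ₗ[F] V)) = ⊤)
    (n : ℕ) (hn : 1 ≤ n) (hpow : (ℓ : ℝ) < ((r : ℝ) / ((r : ℝ) - 1)) ^ n)
    (idx : Fin n → Fin k) (hinj : Function.Injective idx) :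
    (⨆ j : Fin n, S (idx j)) = ⊤ := by
  classical
  set s := r - 1 with hsdef
  have hrs : r = s + 1 := by omega
  set W : ℕ → Submodule F V := fun m => ⨆ j : Fin n, ⨆ _ : (j : ℕ) < m, S (idx j) with hWdef
  -- W 0 = ⊥
  have hW0 : W 0 = ⊥ := by
    simp [hWdef]
  -- successor formula
  have hWsucc : ∀ m (hm : m < n), W (m + 1) = W m ⊔ S (idx ⟨m, hm⟩) := by
    intro m hm
    apply le_antisymm
    · refine iSup₂_le fun j hj => ?_
      rcases Nat.lt_succ_iff_lt_or_eq.1 hj with hj' | hj'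
      · exact le_sup_of_le_left (le_iSup₂ (f := fun j _ => S (idx j)) j hj')
      · have : j = ⟨m, hm⟩ := Fin.ext hj'
        rw [this]
        exact le_sup_right
    · refine sup_le ?_ ?_
      · refine iSup₂_le fun j hj => le_iSup₂ (f := fun j _ => S (idx j)) j (Nat.lt_succ_of_lt hj)
      · exact le_iSup₂ (f := fun j _ => S (idx j)) ⟨m, hm⟩ (Nat.lt_succ_self m)
  -- invariance
  have hinv : ∀ m (hm : m < n) (t : Fin r),
      (W m).map (A t (idx ⟨m, hm⟩) : V →ₗ[F] V) = W m := by
    intro m hm t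
    rw [hWdef]
    simp only [Submodule.map_iSup]
    refine iSup_congr fun j => ?_
    refine iSup_congr fun hj => ?_
    refine h1 t (idx j) (idx ⟨m, hm⟩) (hinj.ne ?_)
    intro hEq
    rw [hEq] at hj
    exact Nat.lt_irrefl m hj
  -- main induction
  have main : ∀ m, m ≤ n → r ^ m * ℓ ≤ r ^ m * finrank F (W m) + s ^ m * ℓ := by
    intro m
    induction m with
    | zero => intro _; simp
    | succ m ih =>
      intro hm1
      have hm : m < n := hm1
      have ihm := ih (Nat.le_of_lt hm1)
      have hstep := aux_key hdim (S (idx ⟨m, hm⟩)) (fun t => A t (idx ⟨m, hm⟩)) (W m)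
        (hinv m hm) (h2 (idx ⟨m, hm⟩))
      rw [← hWsucc m hm] at hstep
      set d := finrank F (W m)
      set d' := finrank F (W (m + 1))
      have h3 : ℓ + s * d ≤ r * d' := by
        have : ℓ + s * d + d ≤ r * d' + d := by
          calc ℓ + s * d + d = ℓ + r * d := by rw [hrs]; ring
            _ ≤ r * d' + d := hstep
        omega
      have hA : r ^ m * ℓ + s * (r ^ m * d) ≤ r ^ (m + 1) * d' :=
        calc r ^ m * ℓ + s * (r ^ m * d) = r ^ m * (ℓ + s * d) := by ring
          _ ≤ r ^ m * (r * d') := Nat.mul_le_mul_left _ h3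
          _ = r ^ (m + 1) * d' := by ring
      have hB : s * (r ^ m * ℓ) ≤ s * (r ^ m * d) + s * (s ^ m * ℓ) :=
        calc s * (r ^ m * ℓ) ≤ s * (r ^ m * d + s ^ m * ℓ) := Nat.mul_le_mul_left _ ihm
          _ = s * (r ^ m * d) + s * (s ^ m * ℓ) := by ring
      have e1 : r ^ (m + 1) * ℓ = r ^ m * ℓ + s * (r ^ m * ℓ) := by rw [hrs]; ring
      have e2 : s ^ (m + 1) * ℓ = s * (s ^ m * ℓ) := by ring
      rw [e1, e2]
      omega
  -- numeric conclusion
  have hspos : (0 : ℝ) < (s : ℝ) := by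
    have : 1 ≤ s := by omega
    exact_mod_cast Nat.lt_of_lt_of_le Nat.zero_lt_one this
  have hcast : ((r : ℝ) - 1) = (s : ℝ) := by
    rw [hsdef]
    push_cast [Nat.cast_sub (by omega : 1 ≤ r)]
    ring
  have hltR : (ℓ : ℝ) * (s : ℝ) ^ n < (r : ℝ) ^ n := by
    rw [hcast, div_pow] at hpow
    exact (lt_div_iff₀ (by positivity)).1 hpow
  have hltN : ℓ * s ^ n < r ^ n := by exact_mod_cast hltR
  have hmn := main n le_rfl
  have hfin : ℓ ≤ finrank F (W n) := by
    have hrpos : 0 < r ^ n := Nat.pow_pos (by omega)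
    have : r ^ n * ℓ < r ^ n * (finrank F (W n) + 1) := by
      calc r ^ n * ℓ ≤ r ^ n * finrank F (W n) + s ^ n * ℓ := hmn
        _ < r ^ n * finrank F (W n) + r ^ n := by
            have : s ^ n * ℓ < r ^ n := by
              calc s ^ n * ℓ = ℓ * s ^ n := by ring
                _ < r ^ n := hltN
            omega
        _ = r ^ n * (finrank F (W n) + 1) := by ring
    have := Nat.lt_of_mul_lt_mul_left this
    omega
  have hfin2 : finrank F (W n) = finrank F V := by
    have hle : finrank F (W n) ≤ finrank F V := (W n).finrank_le
    omega
  have htop : W n = ⊤ := Submodule.eq_top_of_finrank_eq hfin2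
  have : W n = ⨆ j : Fin n, S (idx j) := iSup_congr fun j => iSup_pos j.isLt
  rw [← this, htop]
end

section
/- Let V be an ℓ-dimensional vector space over a field F with ℓ even, and let k ≥ 2. Let A_{1,j} and A_{2,j} (j ∈ {1,…,k}) be invertible linear endomorphisms of V, and let P_1, …, P_k and Q_1, …, Q_k be subspaces of V, each of dimension ℓ/2, such that A_{1,i}(P_j) = A_{2,i}(Q_j) for all distinct i, j in {1,…,k}, and A_{1,i}(P_i) ∩ A_{2,i}(Q_i) = {0} for all i in {1,…,k}. For i ∈ {1,…,k−1} define Θ_i as the composition applying A_{1,i} first, then A_{2,i}^{-1}, then A_{2,k}, then A_{1,k}^{-1} (the paper's product A_{1,i}A_{2,i}^{-1}A_{2,k}A_{1,k}^{-1} under the row-vector convention). Then for every i ∈ {1,…,k−1}: Θ_i(P_j) = P_j for all j ∉ {i, k}, and Θ_i(P_i) ∩ P_i = {0}. -/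
/-- Let `V` be `ℓ`-dimensional (`ℓ` even) and consider `m + 1 ≥ 2` nodes.
Given invertible endomorphisms `A_{1,j}, A_{2,j}` and subspaces `P_j, Q_j` of dimension
`ℓ/2` with `A_{1,i}(P_j) = A_{2,i}(Q_j)` for `i ≠ j` and `A_{1,i}(P_i) ∩ A_{2,i}(Q_i) = {0}`,
define for each non-last node `i` the map `Θ_i = A_{1,i} A_{2,i}⁻¹ A_{2,last} A_{1,last}⁻¹`
(applied in that order, `A_{1,i}` first). Then `Θ_i(P_j) = P_j` for `j ∉ {i, last}`,
and `Θ_i(P_i) ∩ P_i = {0}`. -/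
theorem stmt15 (F : Type*) [Field F] (V : Type*) [AddCommGroup V] [Module F V]
    [FiniteDimensional F V] (ℓ : ℕ) (hℓeven : Even ℓ) (hℓpos : 0 < ℓ)
    (hdim : Module.finrank F V = ℓ)
    (m : ℕ) (hm : 1 ≤ m)
    (A1 A2 : Fin (m + 1) → V ≃ₗ[F] V) (P Q : Fin (m + 1) → Submodule F V)
    (hPdim : ∀ j, Module.finrank F (P j) = ℓ / 2)
    (hQdim : ∀ j, Module.finrank F (Q j) = ℓ / 2)
    (h1 : ∀ i j : Fin (m + 1), i ≠ j →
      (P j).map (A1 i : V →ₗ[F] V) = (Q j).map (A2 i : V →ₗ[F] V))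
    (h2 : ∀ i : Fin (m + 1),
      (P i).map (A1 i : V →ₗ[F] V) ⊓ (Q i).map (A2 i : V →ₗ[F] V) = ⊥)
    (Θ : Fin m → V ≃ₗ[F] V)
    (hΘ : ∀ i : Fin m, Θ i =
      (((A1 i.castSucc).trans (A2 i.castSucc).symm).trans (A2 (Fin.last m))).trans
        (A1 (Fin.last m)).symm) :
    ∀ i : Fin m,
      (∀ j : Fin (m + 1), j ≠ i.castSucc → j ≠ Fin.last m →
        (P j).map (Θ i : V →ₗ[F] V) = P j) ∧
      (P i.castSucc).map (Θ i : V →ₗ[F] V) ⊓ P i.castSucc = ⊥ := by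
  intro i
  have hine : i.castSucc ≠ Fin.last m := (Fin.castSucc_lt_last i).ne
  -- generic helpers
  have hmap2 : ∀ (e : V ≃ₗ[F] V) (S : Submodule F V),
      (S.map (e : V →ₗ[F] V)).map (e.symm : V →ₗ[F] V) = S := by
    intro e S; rw [← Submodule.map_comp]; simp
  have hΘmap : ∀ S : Submodule F V, S.map (Θ i : V →ₗ[F] V) =
      (((S.map (A1 i.castSucc : V →ₗ[F] V)).map ((A2 i.castSucc).symm : V →ₗ[F] V)).map
        (A2 (Fin.last m) : V →ₗ[F] V)).map ((A1 (Fin.last m)).symm : V →ₗ[F] V) := by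
    intro S
    rw [hΘ i]
    simp only [LinearEquiv.coe_trans, Submodule.map_comp]
  constructor
  · intro j hji hjl
    rw [hΘmap, h1 i.castSucc j (Ne.symm hji), hmap2,
      ← h1 (Fin.last m) j (Ne.symm hjl), hmap2]
  · set S := P i.castSucc with hS
    have key : ((S.map (A1 i.castSucc : V →ₗ[F] V)).map ((A2 i.castSucc).symm : V →ₗ[F] V))
        ⊓ Q i.castSucc = ⊥ := by
      have := h2 i.castSucc
      have h := congrArg (Submodule.map ((A2 i.castSucc).symm : V →ₗ[F] V)) this
      rwa [Submodule.map_inf ((A2 i.castSucc).symm : V →ₗ[F] V) (A2 i.castSucc).symm.injective, hmap2,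
        Submodule.map_bot] at h
    have h3 : S.map (Θ i : V →ₗ[F] V) ⊓ S =
        ((((S.map (A1 i.castSucc : V →ₗ[F] V)).map ((A2 i.castSucc).symm : V →ₗ[F] V))
          ⊓ Q i.castSucc).map (A2 (Fin.last m) : V →ₗ[F] V)).map
          ((A1 (Fin.last m)).symm : V →ₗ[F] V) := by
      rw [Submodule.map_inf (A2 (Fin.last m) : V →ₗ[F] V) (A2 (Fin.last m)).injective,
        Submodule.map_inf ((A1 (Fin.last m)).symm : V →ₗ[F] V) (A1 (Fin.last m)).symm.injective, hΘmap]
      congr 1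
      rw [← h1 (Fin.last m) i.castSucc (Ne.symm hine), hmap2]
    rw [h3, key, Submodule.map_bot, Submodule.map_bot]
end
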